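/- arXiv:1510.05117 — 5 statements merged into one kernel-verified Lean document; each statement's English description precedes it below -/
import Mathlib

section
/- Let G be a graph with some orientation, D its directed incidence matrix, and X its (unsigned) incidence matrix. If the block matrices [[O, D],[D^T, O]] and [[O, X],[X^T, O]] have the same multiset of nonzero eigenvalues, then G is bipartite. -/
open Matrix Polynomial

/-- Vertex–edge incidence matrix (unsigned). -/
def vertexEdgeIncMatrix {V : Type*} [Fintype V] [DecidableEq V] (G : SimpleGraph V)
    [DecidableRel G.Adj] : Matrix V G.edgeSet ℝ :=
  Matrix.of fun v e => if v ∈ (e : Sym2 V) then 1 else 0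

/-- Directed incidence matrix with respect to an orientation `o` (edge `e` goes from
`(o e).1` to `(o e).2`): `+1` at the head, `-1` at the tail. -/
def dirIncMatrix {V : Type*} [Fintype V] [DecidableEq V] (G : SimpleGraph V)
    [DecidableRel G.Adj] (o : G.edgeSet → V × V) : Matrix V G.edgeSet ℝ :=
  Matrix.of fun v e => if v = (o e).2 then 1 else if v = (o e).1 then -1 else 0

private lemma colorable_two_of_no_odd_walk {V : Type*} (G : SimpleGraph V)
    (h : ∀ (u : V) (p : G.Walk u u), ¬ Odd p.length) : G.Colorable 2 := by
  classical
  have hpar' : ∀ {a b : V} (p q : G.Walk a b), (Odd p.length ↔ Odd q.length) := by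
    intro a b p q
    have hcl := h a (p.append q.reverse)
    rw [SimpleGraph.Walk.length_append, SimpleGraph.Walk.length_reverse,
      Nat.odd_add, ← Nat.not_odd_iff_even] at hcl
    tauto
  have hreach : ∀ v : V, G.Reachable ((G.connectedComponentMk v).out) v := by
    intro v
    exact SimpleGraph.ConnectedComponent.eq.mp ((G.connectedComponentMk v).out_eq)
  let pw : ∀ v : V, G.Walk ((G.connectedComponentMk v).out) v := fun v => (hreach v).some
  let c : V → Bool := fun v => decide (Odd (pw v).length)
  have hvalid : ∀ {u v : V}, G.Adj u v → c u ≠ c v := by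
    intro u v huv
    have hcomp : G.connectedComponentMk u = G.connectedComponentMk v :=
      SimpleGraph.ConnectedComponent.eq.mpr huv.reachable
    have hout : (G.connectedComponentMk u).out = (G.connectedComponentMk v).out := by
      rw [hcomp]
    let q : G.Walk ((G.connectedComponentMk v).out) v :=
      ((pw u).concat huv).copy hout rfl
    have hlq : q.length = (pw u).length + 1 := by
      simp [q, SimpleGraph.Walk.length_copy, SimpleGraph.Walk.length_concat]
    have := hpar' q (pw v)
    rw [hlq, Nat.odd_add_one] at this
    simp only [c, ne_eq, decide_eq_decide]
    tauto
  have coloring : G.Coloring Bool := SimpleGraph.Coloring.mk c (fun hadj => hvalid hadj)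
  have := coloring.colorable
  simpa using this

private lemma charpoly_conj_eq {n : Type*} [Fintype n] [DecidableEq n] {R : Type*} [CommRing R]
    (P Q A : Matrix n n R) (hPQ : P * Q = 1) :
    (P * A * Q).charpoly = A.charpoly := by
  have hmapmul : ∀ (X Y : Matrix n n R), (X * Y).map (Polynomial.C (R := R)) =
      X.map Polynomial.C * Y.map Polynomial.C := fun X Y =>
    Matrix.map_mul (f := (Polynomial.C : R →+* R[X]))
  have hmapone : (1 : Matrix n n R).map (Polynomial.C (R := R)) = 1 :=
    Matrix.map_one _ (map_zero _) (map_one _)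
  have hcomm : Commute (Matrix.scalar n (X : R[X])) (P.map Polynomial.C) :=
    Matrix.scalar_commute _ (fun r' => Commute.all _ _) _
  have hch : charmatrix (P * A * Q) =
      P.map Polynomial.C * charmatrix A * Q.map Polynomial.C := by
    rw [charmatrix, charmatrix, RingHom.mapMatrix_apply, RingHom.mapMatrix_apply]
    rw [mul_sub, sub_mul]
    congr 1
    · rw [← hcomm.eq, mul_assoc, ← hmapmul, hPQ, hmapone, mul_one]
    · rw [← hmapmul, ← hmapmul]
  rw [Matrix.charpoly, Matrix.charpoly, hch, Matrix.det_mul, Matrix.det_mul]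
  have hQP : Q * P = 1 := mul_eq_one_comm.mp hPQ
  have : (P.map Polynomial.C).det * (Q.map Polynomial.C).det = 1 := by
    rw [mul_comm, ← Matrix.det_mul, ← hmapmul, hQP, hmapone, Matrix.det_one]
  calc (P.map Polynomial.C).det * (charmatrix A).det * (Q.map Polynomial.C).det
      = (charmatrix A).det * ((P.map Polynomial.C).det * (Q.map Polynomial.C).det) := by ring
    _ = (charmatrix A).det := by rw [this, mul_one]

private lemma charpoly_diagonal' {n : Type*} [Fintype n] [DecidableEq n] {R : Type*} [CommRing R]
    (d : n → R) : (Matrix.diagonal d).charpoly = ∏ i, (X - C (d i)) := by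
  have h : charmatrix (Matrix.diagonal d) = Matrix.diagonal fun i => (X : R[X]) - C (d i) := by
    ext i j
    by_cases hij : i = j
    · subst hij; rw [charmatrix_apply_eq, Matrix.diagonal_apply_eq, Matrix.diagonal_apply_eq]
    · rw [charmatrix_apply_ne _ _ _ hij, Matrix.diagonal_apply_ne _ hij,
        Matrix.diagonal_apply_ne _ hij, map_zero, neg_zero]
  rw [Matrix.charpoly, h, Matrix.det_diagonal]

private lemma hermitian_charpoly_eq {n : Type*} [Fintype n] [DecidableEq n] {A : Matrix n n ℝ}
    (hA : A.IsHermitian) : A.charpoly = ∏ i, (X - C (hA.eigenvalues i)) := by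
  have hU1 : (hA.eigenvectorUnitary : Matrix n n ℝ) * star (hA.eigenvectorUnitary : Matrix n n ℝ)
      = 1 := Matrix.mem_unitaryGroup_iff.mp hA.eigenvectorUnitary.2
  have hspec := hA.spectral_theorem
  rw [RCLike.ofReal_real_eq_id] at hspec
  calc A.charpoly
      = ((hA.eigenvectorUnitary : Matrix n n ℝ) * Matrix.diagonal (id ∘ hA.eigenvalues)
          * star (hA.eigenvectorUnitary : Matrix n n ℝ)).charpoly := by exact congrArg Matrix.charpoly hspec
    _ = (Matrix.diagonal (id ∘ hA.eigenvalues)).charpoly := charpoly_conj_eq _ _ _ hU1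
    _ = ∏ i, (X - C (hA.eigenvalues i)) := charpoly_diagonal' _

private lemma hermitian_trace_pow {n : Type*} [Fintype n] [DecidableEq n] {A : Matrix n n ℝ}
    (hA : A.IsHermitian) (k : ℕ) :
    (A ^ k).trace = ((A.charpoly.roots).map (fun x => x ^ k)).sum := by
  classical
  set U : Matrix n n ℝ := (hA.eigenvectorUnitary : Matrix n n ℝ) with hU
  have hU1 : U * star U = 1 := Matrix.mem_unitaryGroup_iff.mp hA.eigenvectorUnitary.2
  have hU2 : star U * U = 1 := Matrix.mem_unitaryGroup_iff'.mp hA.eigenvectorUnitary.2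
  have hspec := hA.spectral_theorem
  rw [RCLike.ofReal_real_eq_id] at hspec
  -- roots
  have hroots : A.charpoly.roots = Finset.univ.val.map hA.eigenvalues := by
    rw [hermitian_charpoly_eq hA]
    have : ∏ i, (X - C (hA.eigenvalues i))
        = ((Finset.univ.val.map hA.eigenvalues).map fun a => X - C a).prod := by
      rw [Multiset.map_map]; rfl
    rw [this, Polynomial.roots_multiset_prod_X_sub_C]
  set D : Matrix n n ℝ := Matrix.diagonal (id ∘ hA.eigenvalues) with hD
  have hAk : A ^ k = (U * D * star U) ^ k := congrArg (fun M => M ^ k) hspec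
  have hpow : ∀ m : ℕ, (U * D * star U) ^ m = U * D ^ m * star U := by
    intro m
    induction m with
    | zero => rw [pow_zero, pow_zero, mul_one, hU1]
    | succ m ih =>
      rw [pow_succ, ih, pow_succ]
      calc U * D ^ m * star U * (U * D * star U)
          = U * D ^ m * (star U * U) * D * star U := by noncomm_ring
        _ = U * (D ^ m * D) * star U := by rw [hU2]; noncomm_ring
  rw [hAk, hpow k, hD, Matrix.trace_mul_cycle, hU2, one_mul, Matrix.diagonal_pow,
    Matrix.trace_diagonal, hroots, Multiset.map_map]
  rfl

private lemma trace_fromBlocks' {l m R : Type*} [Fintype l] [Fintype m] [AddCommMonoid R]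
    (A : Matrix l l R) (B : Matrix l m R) (C : Matrix m l R) (D : Matrix m m R) :
    (Matrix.fromBlocks A B C D).trace = A.trace + D.trace := by
  simp [Matrix.trace, Fintype.sum_sum_type, Matrix.diag]

private lemma fromBlocks_diag_pow {l m R : Type*} [Fintype l] [Fintype m] [DecidableEq l]
    [DecidableEq m] [CommRing R] (A : Matrix l l R) (B : Matrix m m R) (k : ℕ) :
    (Matrix.fromBlocks A 0 0 B) ^ k = Matrix.fromBlocks (A ^ k) 0 0 (B ^ k) := by
  induction k with
  | zero => simp [Matrix.fromBlocks_one]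
  | succ k ih => rw [pow_succ, pow_succ, pow_succ, ih, Matrix.fromBlocks_multiply]; simp

private lemma trace_pow_mul_comm' {a b R : Type*} [Fintype a] [Fintype b] [DecidableEq a] [DecidableEq b] [CommRing R]
    (A : Matrix a b R) (B : Matrix b a R) (m : ℕ) :
    ((A * B) ^ (m + 1)).trace = ((B * A) ^ (m + 1)).trace := by
  have h : (A * B) ^ (m + 1) = A * (B * A) ^ m * B := by
    induction m with
    | zero => simp
    | succ m ih =>
      rw [pow_succ', ih, pow_succ']
      simp only [Matrix.mul_assoc]
  rw [h, Matrix.trace_mul_cycle, ← pow_succ']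

private lemma sum_pow_eq_of_filter_eq (s t : Multiset ℝ)
    (h : s.filter (fun x => x ≠ 0) = t.filter (fun x => x ≠ 0)) (k : ℕ) (hk : k ≠ 0) :
    (s.map (fun x => x ^ k)).sum = (t.map (fun x => x ^ k)).sum := by
  classical
  have key : ∀ u : Multiset ℝ,
      (u.map (fun x => x ^ k)).sum = ((u.filter (fun x => x ≠ 0)).map (fun x => x ^ k)).sum := by
    intro u
    conv_lhs => rw [← Multiset.filter_add_not (fun x => x ≠ 0) u]
    rw [Multiset.map_add, Multiset.sum_add]
    have hz : (((u.filter (fun x => ¬ x ≠ 0)).map (fun x => x ^ k))).sum = 0 := by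
      apply Multiset.sum_eq_zero
      intro x hx
      obtain ⟨y, hy, rfl⟩ := Multiset.mem_map.mp hx
      have hy0 : y = 0 := not_not.mp (Multiset.of_mem_filter (p := fun x => ¬ x ≠ 0) hy)
      rw [hy0, zero_pow hk]
    rw [hz, add_zero]
  rw [key s, key t, h]

private lemma sum_ite_edge {V : Type*} [Fintype V] [DecidableEq V] (G : SimpleGraph V)
    [DecidableRel G.Adj] (c : Sym2 V) :
    (∑ e : G.edgeSet, if (e : Sym2 V) = c then (1:ℝ) else 0) = if c ∈ G.edgeSet then 1 else 0 := by
  by_cases hc : c ∈ G.edgeSet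
  · rw [if_pos hc, Finset.sum_eq_single (⟨c, hc⟩ : G.edgeSet)]
    · simp
    · intro e _ hne
      rw [if_neg]
      exact fun h => hne (Subtype.ext h)
    · intro h
      exact absurd (Finset.mem_univ _) h
  · rw [if_neg hc]
    apply Finset.sum_eq_zero
    intro e _
    rw [if_neg]
    exact fun h => hc (h ▸ e.2)

private lemma dirInc_mul_transpose {V : Type*} [Fintype V] [DecidableEq V] (G : SimpleGraph V)
    [DecidableRel G.Adj] (o : G.edgeSet → V × V)
    (ho : ∀ e : G.edgeSet, (e : Sym2 V) = s((o e).1, (o e).2)) :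
    dirIncMatrix G o * (dirIncMatrix G o)ᵀ
      = Matrix.diagonal (fun u => ∑ e : G.edgeSet, if u ∈ (e : Sym2 V) then (1:ℝ) else 0)
        - G.adjMatrix ℝ := by
  have hab : ∀ e : G.edgeSet, (o e).1 ≠ (o e).2 := by
    intro e h
    exact G.not_isDiag_of_mem_edgeSet e.2 (by rw [ho e]; exact Sym2.mk_isDiag_iff.mpr h)
  ext u v
  rw [Matrix.mul_apply]
  simp only [Matrix.transpose_apply]
  by_cases huv : u = v
  · subst huv
    have hterm : ∀ e : G.edgeSet, dirIncMatrix G o u e * dirIncMatrix G o u e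
        = if u ∈ (e : Sym2 V) then (1:ℝ) else 0 := by
      intro e
      have hne := hab e
      have hba : (o e).2 ≠ (o e).1 := Ne.symm hne
      simp only [dirIncMatrix, Matrix.of_apply, ho e, Sym2.mem_iff]
      by_cases h2 : u = (o e).2
      · by_cases h1 : u = (o e).1
        · exact (hne (h1.symm.trans h2)).elim
        · simp [h2, hba]
      · by_cases h1 : u = (o e).1
        · simp [h2, h1, hba, hne]
        · simp [h2, h1]
    rw [Finset.sum_congr rfl fun e _ => hterm e, Matrix.sub_apply, Matrix.diagonal_apply_eq]
    simp
  · have hterm : ∀ e : G.edgeSet, dirIncMatrix G o u e * dirIncMatrix G o v e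
        = -(if (e : Sym2 V) = s(u, v) then (1:ℝ) else 0) := by
      intro e
      have hne := hab e
      have hba : (o e).2 ≠ (o e).1 := Ne.symm hne
      simp only [dirIncMatrix, Matrix.of_apply, ho e, Sym2.eq_iff]
      by_cases h2 : u = (o e).2
      · by_cases g2 : v = (o e).2
        · exact (huv (h2.trans g2.symm)).elim
        · by_cases g1 : v = (o e).1
          · -- u = b, v = a
            simp [h2, g1, hba, hne, (Or.inr ⟨g1.symm, h2.symm⟩ : ((o e).1 = u ∧ (o e).2 = v) ∨ ((o e).1 = v ∧ (o e).2 = u))]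
          · -- u = b, v neither
            simp [h2, g2, g1, hba, hne, Ne.symm g2, Ne.symm g1]
      · by_cases h1 : u = (o e).1
        · by_cases g1 : v = (o e).1
          · exact (huv (h1.trans g1.symm)).elim
          · by_cases g2 : v = (o e).2
            · -- u = a, v = b
              simp [h1, h2, g2, hba, hne, (Or.inl ⟨h1.symm, g2.symm⟩ : ((o e).1 = u ∧ (o e).2 = v) ∨ ((o e).1 = v ∧ (o e).2 = u))]
            · -- u = a, v neither
              simp [h1, h2, g2, g1, hne, Ne.symm g2, Ne.symm g1]
        · -- u neither
          simp [h1, h2, hne, Ne.symm h1, Ne.symm h2]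
    rw [Finset.sum_congr rfl fun e _ => hterm e, Finset.sum_neg_distrib,
      sum_ite_edge G s(u, v), Matrix.sub_apply, Matrix.diagonal_apply_ne _ huv]
    simp [SimpleGraph.adjMatrix_apply, SimpleGraph.mem_edgeSet]

private lemma vertexInc_mul_transpose {V : Type*} [Fintype V] [DecidableEq V] (G : SimpleGraph V)
    [DecidableRel G.Adj] :
    vertexEdgeIncMatrix G * (vertexEdgeIncMatrix G)ᵀ
      = Matrix.diagonal (fun u => ∑ e : G.edgeSet, if u ∈ (e : Sym2 V) then (1:ℝ) else 0)
        + G.adjMatrix ℝ := by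
  have hab : ∀ e : G.edgeSet, ¬ (e : Sym2 V).IsDiag := fun e => G.not_isDiag_of_mem_edgeSet e.2
  ext u v
  rw [Matrix.mul_apply]
  simp only [Matrix.transpose_apply]
  by_cases huv : u = v
  · subst huv
    have hterm : ∀ e : G.edgeSet, vertexEdgeIncMatrix G u e * vertexEdgeIncMatrix G u e
        = if u ∈ (e : Sym2 V) then (1:ℝ) else 0 := by
      intro e
      simp only [vertexEdgeIncMatrix, Matrix.of_apply]
      by_cases h : u ∈ (e : Sym2 V) <;> simp [h]
    rw [Finset.sum_congr rfl fun e _ => hterm e, Matrix.add_apply, Matrix.diagonal_apply_eq]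
    simp
  · have hterm : ∀ e : G.edgeSet, vertexEdgeIncMatrix G u e * vertexEdgeIncMatrix G v e
        = if (e : Sym2 V) = s(u, v) then (1:ℝ) else 0 := by
      intro e
      simp only [vertexEdgeIncMatrix, Matrix.of_apply]
      have hmm : ((if u ∈ (e : Sym2 V) then (1:ℝ) else 0) * (if v ∈ (e : Sym2 V) then 1 else 0))
          = if (u ∈ (e : Sym2 V) ∧ v ∈ (e : Sym2 V)) then 1 else 0 := by
        by_cases h1 : u ∈ (e : Sym2 V) <;> by_cases h2 : v ∈ (e : Sym2 V) <;> simp [h1, h2]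
      rw [hmm]
      exact if_congr (Sym2.mem_and_mem_iff huv) rfl rfl
    rw [Finset.sum_congr rfl fun e _ => hterm e, sum_ite_edge G s(u, v), Matrix.add_apply,
      Matrix.diagonal_apply_ne _ huv]
    simp [SimpleGraph.adjMatrix_apply, SimpleGraph.mem_edgeSet]

private lemma key_ineq {n : Type*} [Fintype n] [DecidableEq n] (B A : Matrix n n ℝ)
    (hB : ∀ i j, 0 ≤ B i j) (hA : ∀ i j, 0 ≤ A i j) (k : ℕ) :
    ∀ i j, 2 * (A ^ k) i j ≤ ((B + A) ^ k) i j + (-1 : ℝ) ^ k * ((B - A) ^ k) i j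
      ∧ 0 ≤ ((B + A) ^ k) i j - (-1 : ℝ) ^ k * ((B - A) ^ k) i j := by
  induction k with
  | zero =>
    intro i j
    simp only [pow_zero, one_mul]
    constructor
    · by_cases h : i = j <;> simp [Matrix.one_apply, h] <;> norm_num
    · simp
  | succ k ih =>
    -- nonnegativity of A^k entries is not needed; we use ih
    have hpos : ∀ (m : ℕ) i j, 0 ≤ (A ^ m) i j := by
      intro m
      induction m with
      | zero => intro i j; by_cases h : i = j <;> simp [Matrix.one_apply, h]
      | succ m ihm =>
        intro i j
        rw [pow_succ', Matrix.mul_apply]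
        exact Finset.sum_nonneg fun x _ => mul_nonneg (hA i x) (ihm x j)
    intro i j
    have hQ : ((B + A) ^ (k + 1)) i j = ∑ m, (B i m + A i m) * ((B + A) ^ k) m j := by
      rw [pow_succ', Matrix.mul_apply]
      exact Finset.sum_congr rfl fun m _ => by rw [Matrix.add_apply]
    have hL : ((B - A) ^ (k + 1)) i j = ∑ m, (B i m - A i m) * ((B - A) ^ k) m j := by
      rw [pow_succ', Matrix.mul_apply]
      exact Finset.sum_congr rfl fun m _ => by rw [Matrix.sub_apply]
    have hAk : ((A : Matrix n n ℝ) ^ (k + 1)) i j = ∑ m, A i m * (A ^ k) m j := by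
      rw [pow_succ', Matrix.mul_apply]
    have hsign : ((-1 : ℝ) ^ (k + 1)) = -((-1 : ℝ) ^ k) := by ring
    constructor
    · rw [hQ, hL, hAk, hsign, Finset.mul_sum]
      have : ∀ x : ℝ, -(-x) = x := fun x => by ring
      calc ∑ m, 2 * (A i m * (A ^ k) m j)
          ≤ ∑ m, ((B i m + A i m) * ((B + A) ^ k) m j
              + (-((-1:ℝ) ^ k)) * ((B i m - A i m) * ((B - A) ^ k) m j)) := by
            apply Finset.sum_le_sum
            intro m _
            have h1 := (ih m j).1
            have h2 := (ih m j).2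
            have hBm := hB i m
            have hAm := hA i m
            nlinarith [h1, h2, hBm, hAm]
        _ = ∑ m, (B i m + A i m) * ((B + A) ^ k) m j
              + -((-1:ℝ) ^ k) * ∑ m, (B i m - A i m) * ((B - A) ^ k) m j := by
            rw [Finset.sum_add_distrib, Finset.mul_sum]
    · rw [hQ, hL, hsign]
      have : ∑ m, (B i m + A i m) * ((B + A) ^ k) m j
          - -((-1:ℝ) ^ k) * ∑ m, (B i m - A i m) * ((B - A) ^ k) m j
          = ∑ m, ((B i m + A i m) * ((B + A) ^ k) m j
              + ((-1:ℝ) ^ k) * ((B i m - A i m) * ((B - A) ^ k) m j)) := by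
        rw [Finset.sum_add_distrib, ← Finset.mul_sum]
        ring
      rw [this]
      apply Finset.sum_nonneg
      intro m _
      have h1 := (ih m j).1
      have h2 := (ih m j).2
      have hBm := hB i m
      have hAm := hA i m
      nlinarith [h1, h2, hBm, hAm, hpos k m j]

/-- If for some orientation of `G` the block matrices `[[0, D], [Dᵀ, 0]]` and
`[[0, X], [Xᵀ, 0]]` have the same multiset of nonzero eigenvalues, then `G` is
bipartite (i.e. 2-colorable). -/
theorem bipartite_of_same_nonzero_spectrum {V : Type*} [Fintype V] [DecidableEq V]
    (G : SimpleGraph V) [DecidableRel G.Adj] (o : G.edgeSet → V × V)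
    (ho : ∀ e : G.edgeSet, (e : Sym2 V) = s((o e).1, (o e).2))
    (hspec :
      (Matrix.charpoly
          (Matrix.fromBlocks 0 (dirIncMatrix G o) (dirIncMatrix G o)ᵀ 0)).roots.filter
          (fun x => x ≠ 0) =
        (Matrix.charpoly
            (Matrix.fromBlocks 0 (vertexEdgeIncMatrix G) (vertexEdgeIncMatrix G)ᵀ 0)).roots.filter
          (fun x => x ≠ 0)) :
    G.Colorable 2 := by
  classical
  by_contra hc
  have hex : ¬ ∀ (u : V) (p : G.Walk u u), ¬ Odd p.length :=
    fun hno => hc (colorable_two_of_no_odd_walk G hno)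
  push_neg at hex
  obtain ⟨u, p, hodd⟩ := hex
  obtain ⟨m, hm⟩ := hodd
  set ℓ : ℕ := p.length with hℓ
  set D : Matrix V G.edgeSet ℝ := dirIncMatrix G o with hD
  set X : Matrix V G.edgeSet ℝ := vertexEdgeIncMatrix G with hX
  set M : Matrix (V ⊕ G.edgeSet) (V ⊕ G.edgeSet) ℝ := Matrix.fromBlocks 0 D Dᵀ 0 with hMdef
  set N : Matrix (V ⊕ G.edgeSet) (V ⊕ G.edgeSet) ℝ := Matrix.fromBlocks 0 X Xᵀ 0 with hNdef
  set A : Matrix V V ℝ := G.adjMatrix ℝ with hA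
  set Bd : Matrix V V ℝ :=
    Matrix.diagonal (fun u => ∑ e : G.edgeSet, if u ∈ (e : Sym2 V) then (1:ℝ) else 0) with hBd
  -- Hermitian
  have herm : ∀ (Y : Matrix V G.edgeSet ℝ),
      (Matrix.fromBlocks 0 Y Yᵀ (0 : Matrix G.edgeSet G.edgeSet ℝ)).IsHermitian := by
    intro Y
    have ht : (Matrix.fromBlocks 0 Y Yᵀ (0 : Matrix G.edgeSet G.edgeSet ℝ))ᴴ
        = (Matrix.fromBlocks 0 Y Yᵀ (0 : Matrix G.edgeSet G.edgeSet ℝ))ᵀ := by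
      ext i j
      simp [Matrix.conjTranspose_apply, Matrix.transpose_apply]
    rw [Matrix.IsHermitian, ht, Matrix.fromBlocks_transpose]
    simp
  -- trace equality from the spectra
  have htr : (M ^ (2 * ℓ)).trace = (N ^ (2 * ℓ)).trace := by
    rw [hermitian_trace_pow (herm D) (2 * ℓ), hermitian_trace_pow (herm X) (2 * ℓ)]
    exact sum_pow_eq_of_filter_eq _ _ hspec (2 * ℓ) (by omega)
  -- block structure
  have hblock : ∀ (Y : Matrix V G.edgeSet ℝ),
      ((Matrix.fromBlocks 0 Y Yᵀ (0 : Matrix G.edgeSet G.edgeSet ℝ)) ^ (2 * ℓ)).trace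
        = 2 * ((Y * Yᵀ) ^ ℓ).trace := by
    intro Y
    have h2 : (Matrix.fromBlocks 0 Y Yᵀ (0 : Matrix G.edgeSet G.edgeSet ℝ)) ^ 2
        = Matrix.fromBlocks (Y * Yᵀ) 0 0 (Yᵀ * Y) := by
      rw [pow_two, Matrix.fromBlocks_multiply]
      simp
    rw [pow_mul, h2, fromBlocks_diag_pow, trace_fromBlocks']
    have : ((Yᵀ * Y) ^ ℓ).trace = ((Y * Yᵀ) ^ ℓ).trace := by
      rw [hm]
      exact trace_pow_mul_comm' Yᵀ Y (2 * m)
    rw [this]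
    ring
  have htr2 : ((D * Dᵀ) ^ ℓ).trace = ((X * Xᵀ) ^ ℓ).trace := by
    have := htr
    rw [hMdef, hNdef, hblock D, hblock X] at this
    linarith
  have hL' : D * Dᵀ = Bd - A := by
    rw [hD, hBd, hA]
    exact dirInc_mul_transpose G o ho
  have hQ' : X * Xᵀ = Bd + A := by
    rw [hX, hBd, hA]
    exact vertexInc_mul_transpose G
  have hLQ : ((Bd - A) ^ ℓ).trace = ((Bd + A) ^ ℓ).trace := by
    rw [← hL', ← hQ']
    exact htr2
  -- nonnegativity
  have hBnn : ∀ i j, 0 ≤ Bd i j := by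
    intro i j
    by_cases h : i = j
    · subst h
      rw [hBd, Matrix.diagonal_apply_eq]
      exact Finset.sum_nonneg fun e _ => by positivity
    · rw [hBd, Matrix.diagonal_apply_ne _ h]
  have hAnn : ∀ i j, 0 ≤ A i j := by
    intro i j
    rw [hA]
    by_cases h : G.Adj i j <;> simp [h]
  have hAknn : ∀ i j, 0 ≤ (A ^ ℓ) i j := by
    intro i j
    rw [hA, SimpleGraph.adjMatrix_pow_apply_eq_card_walk]
    positivity
  -- the key inequality, summed along the diagonal
  have hki := key_ineq Bd A hBnn hAnn ℓ
  have hodd' : Odd ℓ := ⟨m, hm⟩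
  have hs : ∀ i : V, 2 * (A ^ ℓ) i i ≤ ((Bd + A) ^ ℓ) i i - ((Bd - A) ^ ℓ) i i := by
    intro i
    have := (hki i i).1
    rw [hodd'.neg_one_pow] at this
    linarith
  have hsum : 2 * ((A ^ ℓ)).trace ≤ ((Bd + A) ^ ℓ).trace - ((Bd - A) ^ ℓ).trace := by
    rw [Matrix.trace, Matrix.trace, Matrix.trace, Finset.mul_sum, ← Finset.sum_sub_distrib]
    exact Finset.sum_le_sum fun i _ => hs i
  -- but the trace of A ^ ℓ is at least 1
  have hwalk : (1 : ℝ) ≤ (A ^ ℓ) u u := by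
    rw [hA, SimpleGraph.adjMatrix_pow_apply_eq_card_walk]
    have : 0 < Fintype.card {q : G.Walk u u | q.length = ℓ} :=
      Fintype.card_pos_iff.mpr ⟨⟨p, rfl⟩⟩
    exact_mod_cast this
  have htrA : (1 : ℝ) ≤ (A ^ ℓ).trace := by
    rw [Matrix.trace]
    calc (1 : ℝ) ≤ (A ^ ℓ) u u := hwalk
      _ ≤ ∑ i, (A ^ ℓ).diag i := Finset.single_le_sum (fun i _ => hAknn i i) (Finset.mem_univ u)
  linarith
end

section
/- For any graph G and any integer k ≥ 1 and any i with 1 ≤ i ≤ k, the number 4·cos²(πi/(2k+1)) is a Laplacian eigenvalue of G with multiplicity at least p_k(G) − q_k(G). -/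
open Matrix Polynomial Real

/-- A walk `w` from `u` to `v` is a pendant path of length `k` if it is a path of length
`k`, its end `u` has degree `1`, its end `v` has degree at least `3`, and all internal
vertices have degree `2`. -/
def IsPendantPath {V : Type*} [Fintype V] [DecidableEq V] (G : SimpleGraph V)
    [DecidableRel G.Adj] {u v : V} (w : G.Walk u v) (k : ℕ) : Prop :=
  w.IsPath ∧ w.length = k ∧ G.degree u = 1 ∧ 3 ≤ G.degree v ∧
    ∀ x ∈ w.support, x ≠ u → x ≠ v → G.degree x = 2

/-- `pendantPathCount G k` is `p_k(G)`, the number of pendant paths of length `k` of `G`. -/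
noncomputable def pendantPathCount {V : Type*} [Fintype V] [DecidableEq V]
    (G : SimpleGraph V) [DecidableRel G.Adj] (k : ℕ) : ℕ :=
  Nat.card {p : (u : V) × (v : V) × G.Walk u v // IsPendantPath G p.2.2 k}

/-- `pendantAttachCount G k` is `q_k(G)`, the number of vertices of degree at least `3`
which are an end vertex of some pendant path of length `k`. -/
noncomputable def pendantAttachCount {V : Type*} [Fintype V] [DecidableEq V]
    (G : SimpleGraph V) [DecidableRel G.Adj] (k : ℕ) : ℕ :=
  Nat.card {v : V // 3 ≤ G.degree v ∧ ∃ u, ∃ w : G.Walk u v, IsPendantPath G w k}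

set_option linter.unusedSectionVars false
set_option linter.unusedVariables false
set_option maxHeartbeats 1000000

section LA
variable {n : Type*} [Fintype n] [DecidableEq n]

lemma my_charpoly_conj (U A : Matrix n n ℝ) (hU : U * star U = 1) (hU' : star U * U = 1) :
    (U * A * star U).charpoly = A.charpoly := by
  have hc : ∀ B : Matrix n n ℝ, Commute (scalar n (X : ℝ[X])) (B.map C) :=
    fun B => scalar_commute _ (fun r' => Commute.all _ _) _
  have hmap : U.map (C : ℝ →+* ℝ[X]) * (star U).map C = 1 := by
    rw [← Matrix.map_mul, hU]; simp
  have hmap' : (star U).map (C : ℝ →+* ℝ[X]) * U.map C = 1 := by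
    rw [← Matrix.map_mul, hU']; simp
  have h1 : charmatrix (U * A * star U) =
      U.map C * charmatrix A * (star U).map C := by
    rw [charmatrix, charmatrix]
    rw [Matrix.mul_sub, Matrix.sub_mul]
    congr 1
    · rw [← (hc U).eq, Matrix.mul_assoc, hmap, Matrix.mul_one]
    · show (RingHom.mapMatrix (C : ℝ →+* ℝ[X])) (U * A * star U) = _
      rw [_root_.map_mul, _root_.map_mul]
      rfl
  rw [Matrix.charpoly, Matrix.charpoly, h1, det_mul, det_mul, mul_comm,
    ← mul_assoc, ← det_mul, hmap']
  simp

lemma my_charpoly_diagonal (d : n → ℝ) :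
    (Matrix.diagonal d).charpoly = ∏ j, (X - C (d j)) := by
  have : charmatrix (Matrix.diagonal d) = Matrix.diagonal (fun j => X - C (d j)) := by
    ext i j
    by_cases h : i = j
    · subst h; simp [charmatrix_apply_eq]
    · simp [charmatrix_apply_ne _ _ _ h, Matrix.diagonal_apply_ne _ h]
  rw [Matrix.charpoly, this, det_diagonal]


lemma card_le_rootMultiplicity (M : Matrix n n ℝ) (hM : M.IsHermitian) (μ : ℝ)
    {ι : Type*} [Fintype ι] (g : ι → n → ℝ)
    (hind : LinearIndependent ℝ g) (heig : ∀ t, M *ᵥ g t = μ • g t) :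
    Fintype.card ι ≤ Polynomial.rootMultiplicity μ M.charpoly := by
  classical
  set U : Matrix n n ℝ := (hM.eigenvectorUnitary : Matrix n n ℝ) with hUdef
  have hU : U * star U = 1 := Matrix.mem_unitaryGroup_iff.mp hM.eigenvectorUnitary.2
  have hU' : star U * U = 1 := Matrix.mem_unitaryGroup_iff'.mp hM.eigenvectorUnitary.2
  set lam : n → ℝ := hM.eigenvalues with hlam
  have hdiag : M = U * Matrix.diagonal lam * star U := by
    have := hM.spectral_theorem
    convert this using 2
    rw [Unitary.conjStarAlgAut_apply]; rfl
  -- the conjugated vectors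
  set y : ι → n → ℝ := fun t => star U *ᵥ g t with hy
  have hy_eig : ∀ t j, lam j * y t j = μ * y t j := by
    intro t j
    have h1 : Matrix.diagonal lam *ᵥ y t = μ • y t := by
      have : star U *ᵥ (M *ᵥ g t) = star U *ᵥ (μ • g t) := by rw [heig]
      rw [hdiag] at this
      simpa [hy, Matrix.mulVec_mulVec, ← Matrix.mul_assoc, hU', Matrix.mulVec_smul] using this
    have := congrFun h1 j
    simpa [Matrix.mulVec_diagonal] using this
  have hy_zero : ∀ t j, lam j ≠ μ → y t j = 0 := by
    intro t j hj
    have := hy_eig t j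
    rcases mul_eq_mul_right_iff.mp this with h | h
    · exact absurd h hj
    · exact h
  -- restriction to the eigenvalue-μ coordinates
  set S : Finset n := Finset.univ.filter (fun j => lam j = μ) with hS
  let r : (n → ℝ) →ₗ[ℝ] (S → ℝ) := LinearMap.funLeft ℝ ℝ Subtype.val
  have hry : LinearIndependent ℝ (fun t => r (y t)) := by
    rw [Fintype.linearIndependent_iff]
    intro c hc
    have hz : ∑ t, c t • y t = 0 := by
      funext j
      by_cases hj : lam j = μ
      · have : j ∈ S := by simp [hS, hj]
        have := congrFun hc ⟨j, this⟩
        simpa [r, LinearMap.funLeft, Finset.sum_apply] using this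
      · simp only [Finset.sum_apply, Pi.smul_apply, Pi.zero_apply]
        exact Finset.sum_eq_zero fun t _ => by rw [hy_zero t j hj, smul_eq_mul, mul_zero]
    have hyind : LinearIndependent ℝ y := by
      have : g = fun t => U *ᵥ y t := by
        funext t
        simp [hy, Matrix.mulVec_mulVec, hU]
      rw [this] at hind
      exact LinearIndependent.of_comp (Matrix.mulVecLin U) hind
    exact Fintype.linearIndependent_iff.mp hyind c hz
  have hcard : Fintype.card ι ≤ S.card := by
    have := hry.fintype_card_le_finrank
    simpa [Module.finrank_pi] using this
  refine hcard.trans ?_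
  -- S.card ≤ rootMultiplicity
  rw [hdiag, my_charpoly_conj U _ hU hU', my_charpoly_diagonal]
  rw [Polynomial.le_rootMultiplicity_iff]
  · have hprod : ∏ j ∈ S, (X - C (lam j)) = (X - C μ) ^ S.card := by
      rw [Finset.prod_congr rfl (fun j hj => by rw [(Finset.mem_filter.mp hj).2]),
        Finset.prod_const]
    rw [← hprod]
    exact Finset.prod_dvd_prod_of_subset _ _ _ (Finset.subset_univ S)
  · exact (monic_prod_of_monic _ _ fun j _ => monic_X_sub_C _).ne_zero

end LA

section Graph
variable {V : Type*} [Fintype V] [DecidableEq V] {G : SimpleGraph V} [DecidableRel G.Adj]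

lemma path_getVert_inj {u v : V} {w : G.Walk u v} (hw : w.IsPath) :
    ∀ {a b : ℕ}, a ≤ w.length → b ≤ w.length → w.getVert a = w.getVert b → a = b := by
  induction w with
  | nil => intro a b ha hb _; simp at ha hb; omega
  | @cons u x v h p ih =>
    rw [SimpleGraph.Walk.cons_isPath_iff] at hw
    intro a b ha hb hab
    simp only [SimpleGraph.Walk.length_cons] at ha hb
    match a, b with
    | 0, 0 => rfl
    | 0, Nat.succ b =>
      exfalso
      apply hw.2
      rw [SimpleGraph.Walk.getVert_zero, SimpleGraph.Walk.getVert_cons_succ] at hab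
      exact SimpleGraph.Walk.mem_support_iff_exists_getVert.mpr ⟨b, hab.symm, by omega⟩
    | Nat.succ a, 0 =>
      exfalso
      apply hw.2
      rw [SimpleGraph.Walk.getVert_zero, SimpleGraph.Walk.getVert_cons_succ] at hab
      exact SimpleGraph.Walk.mem_support_iff_exists_getVert.mpr ⟨a, hab, by omega⟩
    | Nat.succ a, Nat.succ b =>
      simp only [SimpleGraph.Walk.getVert_cons_succ] at hab
      have := ih hw.1 (by omega) (by omega) hab
      omega

namespace PendantAux

variable {u v : V} {w : G.Walk u v} {k : ℕ}

lemma hlen (hw : IsPendantPath G w k) : w.length = k := hw.2.1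

lemma hinj (hw : IsPendantPath G w k) {a b : ℕ} (ha : a ≤ k) (hb : b ≤ k)
    (hab : w.getVert a = w.getVert b) : a = b :=
  path_getVert_inj hw.1 (by rw [hlen hw]; omega) (by rw [hlen hw]; omega) hab

lemma hadj (hw : IsPendantPath G w k) {j : ℕ} (hj : j < k) :
    G.Adj (w.getVert j) (w.getVert (j + 1)) :=
  w.adj_getVert_succ (by rw [hlen hw]; omega)

lemma hmem (hw : IsPendantPath G w k) {j : ℕ} (hj : j ≤ k) : w.getVert j ∈ w.support :=
  SimpleGraph.Walk.mem_support_iff_exists_getVert.mpr ⟨j, rfl, by rw [hlen hw]; omega⟩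

lemma hdegmid (hw : IsPendantPath G w k) {j : ℕ} (h0 : 0 < j) (hj : j < k) :
    G.degree (w.getVert j) = 2 := by
  apply hw.2.2.2.2 _ (hmem hw hj.le)
  · intro hc
    have hc' : w.getVert j = w.getVert 0 := hc.trans (w.getVert_zero).symm
    have := hinj hw hj.le (by omega) hc'
    omega
  · intro hc
    have hc' : w.getVert j = w.getVert k := by
      rw [hc, ← hlen hw, w.getVert_length]
    have := hinj hw hj.le le_rfl hc'
    omega

lemma nbr0 (hw : IsPendantPath G w k) (hk : 1 ≤ k) :
    G.neighborFinset u = {w.getVert 1} := by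
  have h1 : w.getVert 1 ∈ G.neighborFinset u := by
    rw [SimpleGraph.mem_neighborFinset]
    have := hadj hw (by omega : 0 < k)
    simpa using this
  have hcard : (G.neighborFinset u).card = 1 := by
    rw [SimpleGraph.card_neighborFinset_eq_degree]
    exact hw.2.2.1
  rw [Finset.card_eq_one] at hcard
  obtain ⟨a, ha⟩ := hcard
  rw [ha] at h1 ⊢
  simp_all

lemma nbrmid (hw : IsPendantPath G w k) {j : ℕ} (h0 : 0 < j) (hj : j < k) :
    G.neighborFinset (w.getVert j) = {w.getVert (j - 1), w.getVert (j + 1)} := by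
  have hne : w.getVert (j - 1) ≠ w.getVert (j + 1) := fun hc => by
    have := hinj hw (by omega) (by omega) hc; omega
  have hsub : {w.getVert (j - 1), w.getVert (j + 1)} ⊆ G.neighborFinset (w.getVert j) := by
    intro x hx
    rw [Finset.mem_insert, Finset.mem_singleton] at hx
    rw [SimpleGraph.mem_neighborFinset]
    rcases hx with rfl | rfl
    · have := hadj hw (by omega : j - 1 < k)
      rw [Nat.sub_add_cancel h0] at this
      exact this.symm
    · exact hadj hw hj
  refine (Finset.eq_of_subset_of_card_le hsub ?_).symm
  rw [Finset.card_insert_of_notMem (by simpa using hne), Finset.card_singleton]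
  rw [SimpleGraph.card_neighborFinset_eq_degree, hdegmid hw h0 hj]

end PendantAux



private lemma mem_sup_cons {x y z t : V} (h : G.Adj y z) (p : G.Walk z t)
    (hx : x ∈ p.support) : x ∈ (SimpleGraph.Walk.cons h p).support := by
  rw [SimpleGraph.Walk.support_cons]
  exact List.mem_cons_of_mem _ hx

lemma forced_aux {a b : V} (w : G.Walk a b) :
    ∀ {b' prev : V} (w' : G.Walk a b'), w.IsPath → w'.IsPath → G.Adj prev a →
      prev ∉ w.support → prev ∉ w'.support →
      (∀ x ∈ w.support, x ≠ b → G.degree x = 2) →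
      (∀ x ∈ w'.support, x ≠ b' → G.degree x = 2) →
      3 ≤ G.degree b → 3 ≤ G.degree b' →
      (⟨b, w⟩ : Σ t, G.Walk a t) = ⟨b', w'⟩ := by
  induction w with
  | nil =>
    intro b' prev w' hp hp' hprev hpw hpw' hd hd' hb hb'
    cases w' with
    | nil => rfl
    | @cons _ c' _ h' q =>
      exfalso
      rw [SimpleGraph.Walk.cons_isPath_iff] at hp'
      rename_i a
      have hab' : a ≠ b' := by
        rintro rfl
        exact hp'.2 (SimpleGraph.Walk.end_mem_support q)
      have := hd' a (SimpleGraph.Walk.start_mem_support _) hab'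
      omega
  | @cons a c b h p ih =>
    intro b' prev w' hp hp' hprev hpw hpw' hd hd' hb hb'
    have hab : a ≠ b := by
      rintro rfl
      rw [SimpleGraph.Walk.cons_isPath_iff] at hp
      exact hp.2 (SimpleGraph.Walk.end_mem_support p)
    have hdega : G.degree a = 2 := hd a (SimpleGraph.Walk.start_mem_support _) hab
    cases w' with
    | nil =>
      exfalso
      omega
    | @cons _ c' _ h' q =>
      rw [SimpleGraph.Walk.cons_isPath_iff] at hp hp'
      have hcprev : c ≠ prev := by
        rintro rfl
        exact hpw (mem_sup_cons h p (SimpleGraph.Walk.start_mem_support p))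
      have hc'prev : c' ≠ prev := by
        rintro rfl
        exact hpw' (mem_sup_cons h' q (SimpleGraph.Walk.start_mem_support q))
      have hcc' : c = c' := by
        by_contra hne
        have hsub : {prev, c, c'} ⊆ G.neighborFinset a := by
          intro x hx
          simp only [Finset.mem_insert, Finset.mem_singleton] at hx
          rw [SimpleGraph.mem_neighborFinset]
          rcases hx with rfl | rfl | rfl
          · exact hprev.symm
          · exact h
          · exact h'
        have hcard3 : ({prev, c, c'} : Finset V).card = 3 := by
          rw [Finset.card_insert_of_notMem, Finset.card_insert_of_notMem,
            Finset.card_singleton]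
          · simpa using hne
          · simp only [Finset.mem_insert, Finset.mem_singleton]
            push_neg
            exact ⟨fun hc => hcprev hc.symm, fun hc => hc'prev hc.symm⟩
        have := Finset.card_le_card hsub
        rw [hcard3, SimpleGraph.card_neighborFinset_eq_degree, hdega] at this
        omega
      subst hcc'
      have key := ih q hp.1 hp'.1 h hp.2 hp'.2
        (fun x hx hxb => hd x (mem_sup_cons h p hx) hxb)
        (fun x hx hxb => hd' x (mem_sup_cons h' q hx) hxb)
        hb hb'
      obtain ⟨rfl, hpq⟩ := Sigma.mk.inj_iff.mp key
      rw [heq_iff_eq] at hpq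
      subst hpq
      rfl

lemma pendant_unique {u v v' : V} {k k' : ℕ} {w : G.Walk u v} {w' : G.Walk u v'}
    (hw : IsPendantPath G w k) (hw' : IsPendantPath G w' k') :
    (⟨v, w⟩ : Σ t, G.Walk u t) = ⟨v', w'⟩ := by
  obtain ⟨hp, hlen, hdu, hdv, hdmid⟩ := hw
  obtain ⟨hp', hlen', hdu', hdv', hdmid'⟩ := hw'
  cases w with
  | nil => exfalso; omega
  | @cons _ c _ h p =>
    cases w' with
    | nil => exfalso; omega
    | @cons _ c' _ h' q =>
      have hcc' : c = c' := by
        have h1 : (G.neighborFinset u).card = 1 := by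
          rw [SimpleGraph.card_neighborFinset_eq_degree]; exact hdu
        obtain ⟨z, hz⟩ := Finset.card_eq_one.mp h1
        have hc : c ∈ G.neighborFinset u := by rw [SimpleGraph.mem_neighborFinset]; exact h
        have hc' : c' ∈ G.neighborFinset u := by rw [SimpleGraph.mem_neighborFinset]; exact h'
        rw [hz, Finset.mem_singleton] at hc hc'
        rw [hc, hc']
      subst hcc'
      rw [SimpleGraph.Walk.cons_isPath_iff] at hp hp'
      have key := forced_aux p q hp.1 hp'.1 h hp.2 hp'.2
        (fun x hx hxb => hdmid x (mem_sup_cons h p hx)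
          (fun hc => hp.2 (hc ▸ hx)) hxb)
        (fun x hx hxb => hdmid' x (mem_sup_cons h' q hx)
          (fun hc => hp'.2 (hc ▸ hx)) hxb)
        hdv hdv'
      obtain ⟨rfl, hpq⟩ := Sigma.mk.inj_iff.mp key
      rw [heq_iff_eq] at hpq
      subst hpq
      rfl


open PendantAux

noncomputable def ppVec (θ : ℝ) {u v : V} (w : G.Walk u v) (k : ℕ) : V → ℝ :=
  fun x => ∑ j ∈ Finset.range k, if x = w.getVert j then Real.sin (((k : ℝ) - j) * θ) else 0

variable {u v : V} {w : G.Walk u v} {k : ℕ} {θ : ℝ}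

lemma ppVec_getVert (hw : IsPendantPath G w k) {j : ℕ} (hj : j ≤ k) :
    ppVec θ w k (w.getVert j) = Real.sin (((k : ℝ) - j) * θ) := by
  rcases lt_or_eq_of_le hj with hj' | rfl
  · rw [ppVec, Finset.sum_eq_single_of_mem j (Finset.mem_range.mpr hj')]
    · rw [if_pos rfl]
    · intro b hb hbj
      rw [if_neg]
      intro hc
      exact hbj (hinj hw hj (Finset.mem_range.mp hb).le hc).symm
  · rw [ppVec]
    rw [Finset.sum_eq_zero, sub_self, zero_mul, Real.sin_zero]
    intro b hb
    rw [if_neg]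
    intro hc
    have hbk := Finset.mem_range.mp hb
    have := hinj hw le_rfl hbk.le hc
    omega

lemma ppVec_ne_zero (hw : IsPendantPath G w k) {x : V} (hx : ppVec θ w k x ≠ 0) :
    ∃ j, j < k ∧ x = w.getVert j := by
  by_contra hc
  push_neg at hc
  apply hx
  rw [ppVec, Finset.sum_eq_zero]
  intro b hb
  rw [if_neg (hc b (Finset.mem_range.mp hb))]

lemma ppVec_eigen (hw : IsPendantPath G w k) (hk : 1 ≤ k) (μ : ℝ)
    (hrec : ∀ r : ℝ, μ * Real.sin (r * θ) =
      2 * Real.sin (r * θ) - Real.sin ((r + 1) * θ) - Real.sin ((r - 1) * θ))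
    (hbd : μ * Real.sin ((k : ℝ) * θ) =
      Real.sin ((k : ℝ) * θ) - Real.sin (((k : ℝ) - 1) * θ)) :
    (Matrix.diagonal (fun x => (G.degree x : ℝ)) - G.adjMatrix ℝ) *ᵥ ppVec θ w k
      = μ • ppVec θ w k - Real.sin θ • (Pi.single v 1 : V → ℝ) := by
  have hzero : ∀ {x : V}, x ∉ w.support → ppVec θ w k x = 0 := by
    intro x hx
    by_contra hne
    obtain ⟨j, hj, rfl⟩ := ppVec_ne_zero hw hne
    exact hx (hmem hw hj.le)
  funext x
  rw [Matrix.sub_mulVec, Pi.sub_apply, Matrix.mulVec_diagonal,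
    SimpleGraph.adjMatrix_mulVec_apply, Pi.sub_apply, Pi.smul_apply, Pi.smul_apply,
    smul_eq_mul, smul_eq_mul]
  by_cases hx : x ∈ w.support
  · obtain ⟨j, hj, hjk⟩ := SimpleGraph.Walk.mem_support_iff_exists_getVert.mp hx
    rw [hlen hw] at hjk
    subst hj
    rcases Nat.eq_zero_or_pos j with rfl | hj0
    · -- x = u
      have hu : w.getVert 0 = u := w.getVert_zero
      have huv : w.getVert 0 ≠ v := by
        intro hc
        have hc' : w.getVert 0 = w.getVert k := by rw [hc, ← hlen hw, w.getVert_length]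
        have := hinj hw (by omega) le_rfl hc'
        omega
      have hval1 : ppVec θ w k (w.getVert 1) = Real.sin (((k : ℝ) - 1) * θ) := by
        simpa using ppVec_getVert hw hk
      have huv' : u ≠ v := hu ▸ huv
      rw [ppVec_getVert hw (Nat.zero_le k)]
      rw [hu, nbr0 hw hk, Finset.sum_singleton, hval1]
      rw [Pi.single_apply, if_neg huv', mul_zero, sub_zero]
      rw [hw.2.2.1]
      push_cast
      rw [sub_zero]
      linarith [hbd]
    · rcases lt_or_eq_of_le hjk with hjk' | rfl
      · -- internal
        have hne : w.getVert j ≠ v := by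
          intro hc
          have hc' : w.getVert j = w.getVert k := by rw [hc, ← hlen hw, w.getVert_length]
          have := hinj hw hjk (le_refl k) hc'
          omega
        rw [nbrmid hw hj0 hjk', Finset.sum_pair (by
          intro hc
          have := hinj hw (by omega : j - 1 ≤ k) (by omega : j + 1 ≤ k) hc
          omega)]
        rw [ppVec_getVert hw hjk, ppVec_getVert hw (by omega : j - 1 ≤ k),
          ppVec_getVert hw (by omega : j + 1 ≤ k), hdegmid hw hj0 hjk']
        rw [Pi.single_apply, if_neg hne, mul_zero, sub_zero]
        have hcast1 : ((j - 1 : ℕ) : ℝ) = (j : ℝ) - 1 := by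
          push_cast [Nat.cast_sub hj0]; ring
        have hcast2 : ((j + 1 : ℕ) : ℝ) = (j : ℝ) + 1 := by push_cast; ring
        rw [hcast1, hcast2]
        have := hrec ((k : ℝ) - j)
        push_cast
        have e1 : (k : ℝ) - ((j : ℝ) - 1) = ((k : ℝ) - j) + 1 := by ring
        have e2 : (k : ℝ) - ((j : ℝ) + 1) = ((k : ℝ) - j) - 1 := by ring
        rw [e1, e2]
        linarith [this]
      · -- x = v  (here k has been substituted by j)
        have hv : w.getVert j = v := by rw [← hlen hw, w.getVert_length]
        have hfv : ppVec θ w j (w.getVert j) = 0 := by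
          rw [ppVec_getVert hw le_rfl, sub_self, zero_mul, Real.sin_zero]
        rw [hfv, mul_zero, mul_zero, zero_sub, zero_sub]
        rw [Pi.single_apply, if_pos hv]
        have hsum : ∑ y ∈ G.neighborFinset (w.getVert j), ppVec θ w j y = Real.sin θ := by
          have hcong : ∀ y ∈ G.neighborFinset (w.getVert j),
              ppVec θ w j y = if y = w.getVert (j - 1) then Real.sin θ else 0 := by
            intro y hy
            by_cases hyk : y = w.getVert (j - 1)
            · rw [if_pos hyk, hyk, ppVec_getVert hw (by omega : j - 1 ≤ j)]
              have : ((j : ℝ) - ((j - 1 : ℕ) : ℝ)) * θ = 1 * θ := by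
                push_cast [Nat.cast_sub hk]; ring
              rw [this, one_mul]
            · rw [if_neg hyk]
              by_contra hne0
              obtain ⟨j', hj', rfl⟩ := ppVec_ne_zero hw hne0
              rw [SimpleGraph.mem_neighborFinset] at hy
              rcases Nat.eq_zero_or_pos j' with rfl | hj'0
              · -- y = u, adjacent to v
                have hmem2 : w.getVert j ∈ G.neighborFinset (w.getVert 0) := by
                  rw [SimpleGraph.mem_neighborFinset]
                  exact hy.symm
                have hgu : w.getVert 0 = u := w.getVert_zero
                rw [hgu, nbr0 hw hk, Finset.mem_singleton] at hmem2
                have hk1 := hinj hw le_rfl (by omega : 1 ≤ j) hmem2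
                exact hyk (by congr 1; omega)
              · have hmem2 : w.getVert j ∈ G.neighborFinset (w.getVert j') := by
                  rw [SimpleGraph.mem_neighborFinset]
                  exact hy.symm
                rw [nbrmid hw hj'0 hj', Finset.mem_insert, Finset.mem_singleton] at hmem2
                rcases hmem2 with hc | hc
                · have := hinj hw le_rfl (by omega : j' - 1 ≤ j) hc
                  omega
                · have := hinj hw le_rfl (by omega : j' + 1 ≤ j) hc
                  exact hyk (by congr 1; omega)
          rw [Finset.sum_congr rfl hcong]
          rw [Finset.sum_ite_eq' (G.neighborFinset (w.getVert j)) (w.getVert (j - 1))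
            (fun _ => Real.sin θ)]
          rw [if_pos]
          rw [SimpleGraph.mem_neighborFinset]
          have := hadj hw (by omega : j - 1 < j)
          rw [Nat.sub_add_cancel hk] at this
          exact this.symm
        rw [hsum, mul_one]
  · have hxv : x ≠ v := fun hc => hx (hc ▸ SimpleGraph.Walk.end_mem_support w)
    have hsum0 : ∑ y ∈ G.neighborFinset x, ppVec θ w k y = 0 := by
      refine Finset.sum_eq_zero fun y hy => ?_
      by_contra hne0
      obtain ⟨j', hj', rfl⟩ := ppVec_ne_zero hw hne0
      rw [SimpleGraph.mem_neighborFinset] at hy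
      rcases Nat.eq_zero_or_pos j' with rfl | hj'0
      · have hmem2 : x ∈ G.neighborFinset (w.getVert 0) := by
          rw [SimpleGraph.mem_neighborFinset]; exact hy.symm
        have hgu : w.getVert 0 = u := w.getVert_zero
        rw [hgu, nbr0 hw hk, Finset.mem_singleton] at hmem2
        exact hx (hmem2 ▸ hmem hw hk)
      · have hmem2 : x ∈ G.neighborFinset (w.getVert j') := by
          rw [SimpleGraph.mem_neighborFinset]; exact hy.symm
        rw [nbrmid hw hj'0 hj', Finset.mem_insert, Finset.mem_singleton] at hmem2
        rcases hmem2 with hc | hc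
        · exact hx (hc ▸ hmem hw (by omega : j' - 1 ≤ k))
        · exact hx (hc ▸ hmem hw (by omega : j' + 1 ≤ k))
    rw [hzero hx, hsum0, Pi.single_apply, if_neg hxv]
    ring


end Graph

section Trig
variable {k i : ℕ}

lemma trig_rec' (θ r : ℝ) :
    (2 - 2 * Real.cos θ) * Real.sin (r * θ) =
      2 * Real.sin (r * θ) - Real.sin ((r + 1) * θ) - Real.sin ((r - 1) * θ) := by
  have e1 : (r + 1) * θ = r * θ + θ := by ring
  have e2 : (r - 1) * θ = r * θ - θ := by ring
  rw [e1, e2, Real.sin_add, Real.sin_sub]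
  ring

lemma trig_rec (hk : 1 ≤ k) (hi : 1 ≤ i) (hik : i ≤ k) (r : ℝ) :
    (4 * Real.cos (π * i / (2 * k + 1)) ^ 2) * Real.sin (r * (π - 2 * (π * i / (2 * k + 1)))) =
      2 * Real.sin (r * (π - 2 * (π * i / (2 * k + 1))))
      - Real.sin ((r + 1) * (π - 2 * (π * i / (2 * k + 1))))
      - Real.sin ((r - 1) * (π - 2 * (π * i / (2 * k + 1)))) := by
  set φ : ℝ := π * i / (2 * k + 1) with hφ
  have hμ : 4 * Real.cos φ ^ 2 = 2 - 2 * Real.cos (π - 2 * φ) := by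
    rw [Real.cos_pi_sub, Real.cos_two_mul]
    ring
  rw [hμ]
  exact trig_rec' _ r

lemma trig_bd (hk : 1 ≤ k) (hi : 1 ≤ i) (hik : i ≤ k) :
    (4 * Real.cos (π * i / (2 * k + 1)) ^ 2) *
        Real.sin ((k : ℝ) * (π - 2 * (π * i / (2 * k + 1)))) =
      Real.sin ((k : ℝ) * (π - 2 * (π * i / (2 * k + 1))))
      - Real.sin (((k : ℝ) - 1) * (π - 2 * (π * i / (2 * k + 1)))) := by
  have h := trig_rec hk hi hik (k : ℝ)
  set φ : ℝ := π * i / (2 * k + 1) with hφ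
  set θ : ℝ := π - 2 * φ with hθ
  have hper : Real.sin (((k : ℝ) + 1) * θ) = Real.sin ((k : ℝ) * θ) := by
    have h2k : (2 * (k : ℝ) + 1) ≠ 0 := by positivity
    set m : ℤ := (k : ℤ) - i with hm
    have hmr : (m : ℝ) = (k : ℝ) - i := by rw [hm]; push_cast; ring
    have harg : ((k : ℝ) + 1) * θ = (π - (k : ℝ) * θ) + (m : ℝ) * (2 * π) := by
      rw [hmr, hθ, hφ]
      field_simp
      ring
    rw [harg, Real.sin_add_int_mul_two_pi, Real.sin_pi_sub]
  rw [hper] at h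
  linarith

lemma trig_sk (hk : 1 ≤ k) (hi : 1 ≤ i) (hik : i ≤ k) :
    Real.sin ((k : ℝ) * (π - 2 * (π * i / (2 * k + 1)))) ≠ 0 := by
  intro h0
  rw [Real.sin_eq_zero_iff] at h0
  obtain ⟨n, hn⟩ := h0
  have h2k : (2 * (k : ℝ) + 1) ≠ 0 := by positivity
  have hπ : (π : ℝ) ≠ 0 := Real.pi_ne_zero
  -- clear denominators: n * (2k+1) = k * (2k+1) - 2*k*i
  field_simp at hn
  have key := mul_left_cancel₀ hπ (show π * ((n : ℝ) * (2 * k + 1)) =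
      π * ((k : ℝ) * (2 * k + 1) - 2 * k * i) by linear_combination π * hn)
  have keyZ : (n : ℤ) * (2 * k + 1) = (k : ℤ) * (2 * k + 1) - 2 * k * i := by
    exact_mod_cast key
  have hdvd : (i : ℤ) = (2 * (k : ℤ) + 1) * ((i : ℤ) - k + n) := by linear_combination -keyZ
  have hi1 : (1 : ℤ) ≤ i := by exact_mod_cast hi
  have hik' : (i : ℤ) ≤ k := by exact_mod_cast hik
  have hk1 : (1 : ℤ) ≤ k := by exact_mod_cast hk
  rcases le_or_gt ((i : ℤ) - k + n) 0 with hm | hm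
  · nlinarith
  · nlinarith

end Trig

/-- For any graph `G`, any `k ≥ 1` and any `1 ≤ i ≤ k`, the number `4 cos²(π i/(2k+1))`
is a Laplacian eigenvalue of `G` with multiplicity at least `p_k(G) - q_k(G)`. -/
theorem laplacian_pendant_eigenvalue {V : Type*} [Fintype V] [DecidableEq V]
    (G : SimpleGraph V) [DecidableRel G.Adj] (k i : ℕ) (hk : 1 ≤ k) (hi : 1 ≤ i)
    (hik : i ≤ k) :
    pendantPathCount G k - pendantAttachCount G k ≤
      Polynomial.rootMultiplicity (4 * Real.cos (π * i / (2 * k + 1)) ^ 2)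
        (Matrix.charpoly (Matrix.diagonal (fun v => (G.degree v : ℝ)) - G.adjMatrix ℝ)) := by
  classical
  set M : Matrix V V ℝ := Matrix.diagonal (fun v => (G.degree v : ℝ)) - G.adjMatrix ℝ with hMdef
  set φ : ℝ := π * i / (2 * k + 1) with hφdef
  set θ : ℝ := π - 2 * φ with hθdef
  set μ : ℝ := 4 * Real.cos φ ^ 2 with hμdef
  -- trig facts in terms of the set variables
  have hrec : ∀ r : ℝ, μ * Real.sin (r * θ) =
      2 * Real.sin (r * θ) - Real.sin ((r + 1) * θ) - Real.sin ((r - 1) * θ) := by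
    have h := trig_rec (k := k) (i := i) hk hi hik
    simpa only [← hφdef, ← hθdef, ← hμdef] using h
  have hbd : μ * Real.sin ((k : ℝ) * θ) =
      Real.sin ((k : ℝ) * θ) - Real.sin (((k : ℝ) - 1) * θ) := by
    have h := trig_bd (k := k) (i := i) hk hi hik
    simpa only [← hφdef, ← hθdef, ← hμdef] using h
  have hsk : Real.sin ((k : ℝ) * θ) ≠ 0 := by
    have h := trig_sk (k := k) (i := i) hk hi hik
    simpa only [← hφdef, ← hθdef] using h
  -- the two index types
  have hp : pendantPathCount G k =
      Nat.card {u : V // ∃ (t : V) (w : G.Walk u t), IsPendantPath G w k} := by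
    apply Nat.card_congr
    refine Equiv.ofBijective (fun p => ⟨p.1.1, p.1.2.1, p.1.2.2, p.2⟩) ⟨?_, ?_⟩
    · rintro ⟨⟨u, v, w⟩, h⟩ ⟨⟨u', v', w'⟩, h'⟩ hEq
      simp only [Subtype.mk.injEq] at hEq
      obtain rfl := hEq
      obtain ⟨rfl, hw2⟩ := Sigma.mk.inj_iff.mp (pendant_unique h h')
      rw [heq_iff_eq] at hw2
      subst hw2
      rfl
    · rintro ⟨u, t, w, h⟩
      exact ⟨⟨⟨u, t, w⟩, h⟩, rfl⟩
  have hq : pendantAttachCount G k =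
      Nat.card {v : V // 3 ≤ G.degree v ∧ ∃ u, ∃ w : G.Walk u v, IsPendantPath G w k} := rfl
  set Du := {u : V // ∃ (t : V) (w : G.Walk u t), IsPendantPath G w k} with hDu
  set Dv := {v : V // 3 ≤ G.degree v ∧ ∃ u, ∃ w : G.Walk u v, IsPendantPath G w k} with hDv
  haveI : Fintype Du := Fintype.ofFinite _
  haveI : Fintype Dv := Fintype.ofFinite _
  -- choose pendant path data for each u in Du
  choose vtx wk hwk using fun u : Du => u.2
  have hvtxdeg : ∀ u : Du, 3 ≤ G.degree (vtx u) := fun u => (hwk u).2.2.2.1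
  set pr : Du → Dv := fun u => ⟨vtx u, hvtxdeg u, u.val, wk u, hwk u⟩ with hprdef
  have hpr_surj : Function.Surjective pr := by
    rintro ⟨v, hv3, u, w, hw⟩
    refine ⟨⟨u, v, w, hw⟩, ?_⟩
    apply Subtype.ext
    exact congrArg Sigma.fst (pendant_unique (hwk ⟨u, v, w, hw⟩) hw)
  set s : Dv → Du := Function.surjInv hpr_surj with hsdef
  have hs_inj : Function.Injective s := Function.injective_surjInv hpr_surj
  have hps : ∀ d : Dv, pr (s d) = d := fun d => Function.surjInv_eq hpr_surj d
  set T : Finset Du := Finset.univ \ Finset.image s Finset.univ with hTdef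
  have hTcard : T.card = Nat.card Du - Nat.card Dv := by
    rw [hTdef, Finset.card_sdiff_of_subset (Finset.subset_univ _),
      Finset.card_image_of_injective _ hs_inj]
    simp [Nat.card_eq_fintype_card]
  -- the vectors
  set f : Du → (V → ℝ) := fun u => ppVec θ (wk u) k with hfdef
  have hval : ∀ u1 u2 : Du, f u2 u1.val =
      if u1 = u2 then Real.sin ((k : ℝ) * θ) else 0 := by
    intro u1 u2
    by_cases h12 : u1 = u2
    · subst h12
      rw [if_pos rfl]
      have h0 : (wk u1).getVert 0 = u1.val := (wk u1).getVert_zero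
      have := ppVec_getVert (θ := θ) (hwk u1) (Nat.zero_le k)
      rw [h0] at this
      rw [hfdef]
      simp only [this]
      norm_num
    · rw [if_neg h12]
      by_contra hne
      obtain ⟨j, hj, hju⟩ := ppVec_ne_zero (hwk u2) hne
      rcases Nat.eq_zero_or_pos j with rfl | hj0
      · rw [(wk u2).getVert_zero] at hju
        exact h12 (Subtype.ext hju)
      · have hd2 := PendantAux.hdegmid (hwk u2) hj0 hj
        have hd1 : G.degree u1.val = 1 := (hwk u1).2.2.1
        rw [← hju] at hd2
        omega
  have hfeig : ∀ u : Du, M *ᵥ f u = μ • f u - Real.sin θ • (Pi.single (vtx u) 1 : V → ℝ) :=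
    fun u => ppVec_eigen (hwk u) hk μ hrec hbd
  set g : T → (V → ℝ) := fun t => f (s (pr t.val)) - f t.val with hgdef
  have hgeig : ∀ t : T, M *ᵥ g t = μ • g t := by
    intro t
    have hv : vtx (s (pr t.val)) = vtx t.val := by
      have := congrArg Subtype.val (hps (pr t.val))
      rw [hprdef] at this
      exact this
    rw [hgdef]
    simp only
    rw [Matrix.mulVec_sub, hfeig, hfeig, hv, smul_sub]
    abel
  have hgind : LinearIndependent ℝ g := by
    rw [Fintype.linearIndependent_iff]
    intro c hc t0
    have hev := congrFun hc (t0.val.val)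
    simp only [Finset.sum_apply, Pi.smul_apply, Pi.zero_apply, smul_eq_mul] at hev
    have hterm : ∀ t : T, t ∈ Finset.univ →
        c t * g t t0.val.val =
          if t = t0 then -(Real.sin ((k : ℝ) * θ)) * c t else 0 := by
      intro t _
      have h1 : f (s (pr t.val)) t0.val.val = 0 := by
        rw [hval t0.val (s (pr t.val))]
        rw [if_neg]
        intro hc2
        have himg : t0.val ∈ Finset.image s Finset.univ :=
          Finset.mem_image.mpr ⟨pr t.val, Finset.mem_univ _, hc2.symm⟩
        have h3 : t0.val ∈ Finset.univ \ Finset.image s Finset.univ := t0.2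
        exact (Finset.mem_sdiff.mp h3).2 himg
      have h2 : f t.val t0.val.val =
          if t0.val = t.val then Real.sin ((k : ℝ) * θ) else 0 := hval t0.val t.val
      rw [hgdef]
      simp only [Pi.sub_apply, h1, h2, zero_sub]
      by_cases hts : t = t0
      · subst hts
        rw [if_pos rfl, if_pos rfl]
        ring
      · rw [if_neg hts, if_neg (fun hc2 => hts (Subtype.ext (Subtype.ext
          (congrArg Subtype.val hc2))).symm)]
        ring
    rw [Finset.sum_congr rfl hterm, Finset.sum_ite_eq' Finset.univ t0
      (fun t => -(Real.sin ((k : ℝ) * θ)) * c t), if_pos (Finset.mem_univ _)] at hev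
    have := mul_eq_zero.mp hev
    rcases this with h | h
    · exact absurd (neg_eq_zero.mp h) hsk
    · exact h
  -- Hermitian
  have hherm : M.IsHermitian := by
    rw [hMdef]
    apply Matrix.IsHermitian.sub
    · exact Matrix.isHermitian_diagonal _
    · show (G.adjMatrix ℝ).IsHermitian
      ext a b
      simp [Matrix.conjTranspose_apply, SimpleGraph.adjMatrix_apply, SimpleGraph.adj_comm]
  have hmain := card_le_rootMultiplicity M hherm μ g hgind hgeig
  rw [Fintype.card_coe] at hmain
  rw [hp, hq]
  calc Nat.card Du - Nat.card Dv = T.card := hTcard.symm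
    _ ≤ _ := hmain
end

section
/- For any graph G, the number 1 is a Laplacian eigenvalue of G with multiplicity at least p_1(G) − q_1(G), where p_1(G) is the number of pendant vertices (vertices of degree 1 adjacent to a vertex of degree ≥ 3) and q_1(G) is the number of vertices of degree ≥ 3 adjacent to at least one pendant vertex. -/
open Matrix Polynomial Real

section Aux

set_option linter.unusedSectionVars false

section CharpolyAux
variable {n R : Type*} [Fintype n] [DecidableEq n] [CommRing R]

lemma charmatrix_conj (M N D : Matrix n n R) (h1 : M * N = 1) :
    charmatrix (M * D * N) = (M.map C) * charmatrix D * (N.map C) := by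
  have hMN : (M.map (C : R →+* R[X])) * (N.map C) = 1 := by
    rw [← Matrix.map_mul, h1, Matrix.map_one] <;> simp
  have hc : ∀ A : Matrix n n R[X], A * Matrix.scalar n X = Matrix.scalar n X * A :=
    fun A => ((Matrix.scalar_commute X (fun r => Commute.all _ _) A)).symm
  unfold charmatrix
  simp only [RingHom.mapMatrix_apply]
  rw [Matrix.map_mul, Matrix.map_mul, mul_sub, sub_mul, mul_assoc, mul_assoc]
  congr 1
  rw [← hc (N.map C), ← mul_assoc, hMN, one_mul]

lemma charpoly_conj (M N D : Matrix n n R) (h1 : M * N = 1) :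
    (M * D * N).charpoly = D.charpoly := by
  have hMN : (M.map (C : R →+* R[X])) * (N.map C) = 1 := by
    rw [← Matrix.map_mul, h1, Matrix.map_one] <;> simp
  have h3 : (M.map (C : R →+* R[X])).det * (N.map C).det = 1 := by
    rw [← det_mul, hMN, det_one]
  rw [Matrix.charpoly, charmatrix_conj M N D h1, det_mul, det_mul, Matrix.charpoly]
  calc (M.map C).det * (charmatrix D).det * (N.map C).det
      = (charmatrix D).det * ((M.map C).det * (N.map C).det) := by ring
    _ = (charmatrix D).det := by rw [h3, mul_one]

lemma charpoly_diag (d : n → R) :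
    (Matrix.diagonal d).charpoly = ∏ i, (X - C (d i)) := by
  rw [Matrix.charpoly]
  have : charmatrix (Matrix.diagonal d) = Matrix.diagonal (fun i => X - C (d i)) := by
    ext i j
    by_cases h : i = j
    · subst h; simp [charmatrix_apply_eq]
    · simp [charmatrix_apply_ne _ _ _ h, Matrix.diagonal_apply_ne _ h]
  rw [this, det_diagonal]

lemma key_spec {n : Type*} [Fintype n] [DecidableEq n] {A : Matrix n n ℝ} (hA : A.IsHermitian) :
    Module.finrank ℝ (LinearMap.ker (A - 1).mulVecLin) ≤
      rootMultiplicity (1:ℝ) A.charpoly := by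
  set μ := hA.eigenvalues with hμ
  set U : Matrix n n ℝ := (hA.eigenvectorUnitary : Matrix n n ℝ) with hU
  have hmem := hA.eigenvectorUnitary.2
  rw [Unitary.mem_iff] at hmem
  have h1 : U * star U = 1 := hmem.2
  have h2 : star U * U = 1 := hmem.1
  have hofReal : (RCLike.ofReal ∘ μ : n → ℝ) = μ := by funext i; simp
  have hspec : A = U * Matrix.diagonal μ * star U := by
    have := hA.spectral_theorem
    rwa [hofReal] at this
  -- charpoly computation
  have hchar : rootMultiplicity (1:ℝ) A.charpoly = Fintype.card {i // μ i = 1} := by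
    rw [hspec, charpoly_conj _ _ _ h1, charpoly_diag]
    have hprod : ∏ i, (X - C (μ i)) =
        ((Finset.univ.val.map μ).map (fun a : ℝ => X - C a)).prod := by
      rw [Multiset.map_map]
      rfl
    rw [← Polynomial.count_roots, hprod, roots_multiset_prod_X_sub_C,
      Multiset.count_map]
    rw [Fintype.card_subtype]
    congr 1
    apply Multiset.filter_congr
    intro i _
    exact ⟨fun h => h.symm, fun h => h.symm⟩
  -- rank computation
  have hBspec : A - 1 = U * Matrix.diagonal (fun i => μ i - 1) * star U := by
    rw [hspec]
    have : U * Matrix.diagonal μ * star U - 1 = U * (Matrix.diagonal μ - 1) * star U := by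
      rw [mul_sub, mul_one, sub_mul, h1]
    rw [this, ← Matrix.diagonal_one, Matrix.diagonal_sub]
  have hdetU : IsUnit U.det := by
    apply IsUnit.of_mul_eq_one (star U).det
    rw [← det_mul, h1, det_one]
  have hdetsU : IsUnit (star U).det := by
    apply IsUnit.of_mul_eq_one U.det
    rw [← det_mul, h2, det_one]
  have hrank : (A - 1).rank = Fintype.card {i // μ i - 1 ≠ 0} := by
    rw [hBspec, Matrix.rank_mul_eq_left_of_isUnit_det (star U) _ hdetsU,
      Matrix.rank_mul_eq_right_of_isUnit_det U _ hdetU, Matrix.rank_diagonal]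
  have hrn : (A - 1).rank + Module.finrank ℝ (LinearMap.ker (A - 1).mulVecLin)
      = Fintype.card n := by
    rw [Matrix.rank]
    rw [LinearMap.finrank_range_add_finrank_ker]
    simp [Module.finrank_pi]
  have hcompl : Fintype.card {i // μ i - 1 ≠ 0} = Fintype.card n - Fintype.card {i // μ i = 1} := by
    have : Fintype.card {i // μ i - 1 ≠ 0} = Fintype.card {i // ¬ (μ i = 1)} := by
      apply Fintype.card_congr
      apply Equiv.subtypeEquivRight
      intro i
      rw [sub_ne_zero]
    rw [this, Fintype.card_subtype_compl]
  have hle : Fintype.card {i // μ i = 1} ≤ Fintype.card n := Fintype.card_subtype_le _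
  omega

end CharpolyAux

section Comb
variable {V : Type*} [Fintype V] [DecidableEq V] (G : SimpleGraph V) [DecidableRel G.Adj]

lemma walk_eq_of_length_one {u v : V} {w : G.Walk u v} (h : w.length = 1) :
    ∃ ha : G.Adj u v, w = SimpleGraph.Walk.cons ha SimpleGraph.Walk.nil := by
  cases w with
  | nil => simp at h
  | cons ha q =>
    cases q with
    | nil => exact ⟨ha, rfl⟩
    | cons hb r => simp [SimpleGraph.Walk.length_cons] at h

lemma adj_eq_of_degree_one {u v w : V} (h : G.degree u = 1) (h1 : G.Adj u v)
    (h2 : G.Adj u w) : v = w := by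
  rw [← SimpleGraph.card_neighborFinset_eq_degree, Finset.card_eq_one] at h
  obtain ⟨a, ha⟩ := h
  have hv : v ∈ G.neighborFinset u := by rwa [SimpleGraph.mem_neighborFinset]
  have hw : w ∈ G.neighborFinset u := by rwa [SimpleGraph.mem_neighborFinset]
  rw [ha, Finset.mem_singleton] at hv hw
  rw [hv, hw]

lemma isPendantPath_cons {u v : V} (h : G.Adj u v) (hu : G.degree u = 1)
    (hv : 3 ≤ G.degree v) :
    IsPendantPath G (SimpleGraph.Walk.cons h SimpleGraph.Walk.nil) 1 := by
  refine ⟨?_, rfl, hu, hv, ?_⟩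
  · rw [SimpleGraph.Walk.cons_isPath_iff]
    exact ⟨SimpleGraph.Walk.IsPath.nil, by simp [h.ne]⟩
  · intro x hx hxu hxv
    simp [SimpleGraph.Walk.support_cons] at hx
    rcases hx with h' | h' <;> [exact absurd h' hxu; exact absurd h' hxv]

lemma comb_le :
    pendantPathCount G 1 - pendantAttachCount G 1 ≤
      Module.finrank ℝ (LinearMap.ker
        ((Matrix.diagonal (fun v => (G.degree v : ℝ)) - G.adjMatrix ℝ - 1)).mulVecLin) := by
  classical
  set Pp : V → Prop := fun u => G.degree u = 1 ∧ ∃ v, G.Adj u v ∧ 3 ≤ G.degree v with hPp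
  set Qp : V → Prop := fun v => 3 ≤ G.degree v ∧ ∃ u, ∃ w : G.Walk u v, IsPendantPath G w 1
    with hQp
  -- the neighbor map
  have nbr_spec : ∀ u : {u // Pp u}, ∃ v, G.Adj ↑u v ∧ 3 ≤ G.degree v := fun u => u.2.2
  set nbr : {u // Pp u} → V := fun u => (nbr_spec u).choose with hnbr
  have nbr_adj : ∀ u : {u // Pp u}, G.Adj ↑u (nbr u) := fun u => (nbr_spec u).choose_spec.1
  have nbr_deg : ∀ u : {u // Pp u}, 3 ≤ G.degree (nbr u) := fun u => (nbr_spec u).choose_spec.2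
  have nbr_eq : ∀ (u : {u // Pp u}) {v : V}, G.Adj ↑u v → nbr u = v := fun u v hv =>
    adj_eq_of_degree_one G u.2.1 (nbr_adj u) hv
  have nbr_Q : ∀ u : {u // Pp u}, Qp (nbr u) := by
    intro u
    refine ⟨nbr_deg u, ↑u, SimpleGraph.Walk.cons (nbr_adj u) SimpleGraph.Walk.nil, ?_⟩
    exact isPendantPath_cons G (nbr_adj u) u.2.1 (nbr_deg u)
  -- counting
  have hp : pendantPathCount G 1 ≤ Fintype.card {u // Pp u} := by
    rw [pendantPathCount, ← Nat.card_eq_fintype_card]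
    have key : ∀ p : {p : (u : V) × (v : V) × G.Walk u v // IsPendantPath G p.2.2 1},
        Pp p.1.1 := by
      rintro ⟨⟨u, v, w⟩, hp⟩
      exact ⟨hp.2.2.1, v, SimpleGraph.Walk.adj_of_length_eq_one hp.2.1, hp.2.2.2.1⟩
    apply Nat.card_le_card_of_injective (fun p => (⟨p.1.1, key p⟩ : {u // Pp u}))
    rintro ⟨⟨u, v, w⟩, ha⟩ ⟨⟨u', v', w'⟩, hb⟩ hab
    simp only [Subtype.mk.injEq] at hab ⊢
    subst hab
    dsimp only at ha hb
    have hv : v = v' := adj_eq_of_degree_one G ha.2.2.1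
      (SimpleGraph.Walk.adj_of_length_eq_one ha.2.1)
      (SimpleGraph.Walk.adj_of_length_eq_one hb.2.1)
    subst hv
    obtain ⟨ha1, hw1⟩ := walk_eq_of_length_one G ha.2.1
    obtain ⟨hb1, hw2⟩ := walk_eq_of_length_one G hb.2.1
    rw [hw1, hw2]
  have hq : pendantAttachCount G 1 = Fintype.card {v // Qp v} := by
    rw [pendantAttachCount, Nat.card_eq_fintype_card]
  -- the extension-by-zero map
  set Ψf : ({u // Pp u} → ℝ) → (V → ℝ) :=
    fun x v => if h : Pp v then x ⟨v, h⟩ else 0 with hΨf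
  have Ψadd : ∀ x y, Ψf (x + y) = Ψf x + Ψf y := by
    intro x y; funext v; simp only [hΨf, Pi.add_apply]; split <;> simp
  have Ψsmul : ∀ (c : ℝ) x, Ψf (c • x) = c • Ψf x := by
    intro c x; funext v; simp only [hΨf, Pi.smul_apply, smul_eq_mul]; split <;> simp
  set Ψ : ({u // Pp u} → ℝ) →ₗ[ℝ] (V → ℝ) :=
    { toFun := Ψf, map_add' := Ψadd, map_smul' := Ψsmul } with hΨ
  have Ψinj : Function.Injective Ψ := by
    intro x y hxy
    funext u
    have := congrFun hxy ↑u
    simpa [hΨ, hΨf, dif_pos u.2] using this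
  -- the fiber-sum map
  set Sf : ({u // Pp u} → ℝ) → ({v // Qp v} → ℝ) :=
    fun x q => ∑ u : {u // Pp u}, if nbr u = ↑q then x u else 0 with hSf
  set S : ({u // Pp u} → ℝ) →ₗ[ℝ] ({v // Qp v} → ℝ) :=
    { toFun := Sf
      map_add' := by
        intro x y; funext q
        simp only [hSf, Pi.add_apply, ← Finset.sum_add_distrib]
        apply Finset.sum_congr rfl
        intro u _; split <;> simp
      map_smul' := by
        intro c x; funext q
        simp only [hSf, Pi.smul_apply, smul_eq_mul, RingHom.id_apply, Finset.mul_sum]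
        apply Finset.sum_congr rfl
        intro u _; split <;> simp } with hS
  -- key sum identity
  have hsum : ∀ (x : {u // Pp u} → ℝ) (v : V),
      ∑ w ∈ G.neighborFinset v, Ψf x w
        = ∑ u : {u // Pp u}, if G.Adj v ↑u then x u else 0 := by
    intro x v
    have step1 : ∀ u : {u // Pp u}, (if G.Adj v ↑u then x u else 0)
        = (if (↑u : V) ∈ G.neighborFinset v then Ψf x ↑u else 0) := by
      intro u
      by_cases h : G.Adj v ↑u <;>
        simp [h, SimpleGraph.mem_neighborFinset, hΨf, dif_pos u.2]
    rw [Finset.sum_congr rfl (fun u _ => step1 u)]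
    set g : V → ℝ := fun w => if w ∈ G.neighborFinset v then Ψf x w else 0 with hg
    have e1 : ∑ u : {u // Pp u}, g ↑u = ∑ w ∈ Finset.univ.filter Pp, g w := by
      rw [← Finset.sum_subtype_eq_sum_filter]
      rw [Finset.subtype_univ]
    have e2 : ∑ w ∈ Finset.univ.filter Pp, g w = ∑ w : V, g w := by
      apply Finset.sum_filter_of_ne
      intro w _ hw
      by_contra hnp
      apply hw
      simp [hg, hΨf, dif_neg hnp, ite_self]
      intro _ h; exact absurd h hnp
    have e3 : ∑ w : V, g w = ∑ w ∈ G.neighborFinset v, Ψf x w := by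
      simp only [hg]
      exact Fintype.sum_ite_mem _ _
    rw [e1, e2, e3]
  -- kernel membership
  have hker : ∀ x ∈ LinearMap.ker S,
      Ψ x ∈ LinearMap.ker
        ((Matrix.diagonal (fun v => (G.degree v : ℝ)) - G.adjMatrix ℝ - 1)).mulVecLin := by
    intro x hx
    rw [LinearMap.mem_ker]
    funext v
    rw [Matrix.mulVecLin_apply, Matrix.sub_mulVec, Matrix.sub_mulVec, Matrix.one_mulVec]
    simp only [Pi.sub_apply, Matrix.mulVec_diagonal, SimpleGraph.adjMatrix_mulVec_apply,
      Pi.zero_apply]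
    show (G.degree v : ℝ) * Ψf x v - (∑ w ∈ G.neighborFinset v, Ψf x w) - Ψf x v = 0
    rw [hsum]
    by_cases hv : Pp v
    · -- v is a pendant vertex: degree 1, all P-neighbors impossible
      have hdeg : G.degree v = 1 := hv.1
      have hzero : ∀ u : {u // Pp u}, (if G.Adj v ↑u then x u else 0) = 0 := by
        intro u
        split
        · next hadj =>
            exfalso
            have := nbr_eq u hadj.symm
            have h3 := nbr_deg u
            rw [this] at h3
            omega
        · rfl
      rw [Finset.sum_congr rfl (fun u _ => hzero u), Finset.sum_const_zero]
      simp [hΨf, dif_pos hv, hdeg]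
    · -- v is not pendant
      have hv0 : Ψf x v = 0 := by simp [hΨf, dif_neg hv]
      rw [hv0]
      by_cases hqv : Qp v
      · have : ∑ u : {u // Pp u}, (if G.Adj v ↑u then x u else 0)
            = Sf x ⟨v, hqv⟩ := by
          rw [hSf]
          apply Finset.sum_congr rfl
          intro u _
          congr 1
          simp only [eq_iff_iff]
          constructor
          · intro h; exact nbr_eq u h.symm
          · intro h; rw [← h]; exact (nbr_adj u).symm
        rw [this]
        have := LinearMap.mem_ker.mp hx
        have := congrFun this ⟨v, hqv⟩
        simp only [hS] at this
        rw [show Sf x ⟨v, hqv⟩ = 0 from this]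
        ring
      · have hzero : ∀ u : {u // Pp u}, (if G.Adj v ↑u then x u else 0) = 0 := by
          intro u
          split
          · next hadj =>
              exfalso
              apply hqv
              have := nbr_eq u hadj.symm
              rw [← this]
              exact nbr_Q u
          · rfl
        rw [Finset.sum_congr rfl (fun u _ => hzero u), Finset.sum_const_zero]
        ring
  -- dimension counting
  set K := LinearMap.ker S with hK
  have hdimK : Fintype.card {u // Pp u} - Fintype.card {v // Qp v} ≤ Module.finrank ℝ K := by
    have h1 : Module.finrank ℝ (LinearMap.range S) + Module.finrank ℝ K
        = Fintype.card {u // Pp u} := by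
      rw [hK, LinearMap.finrank_range_add_finrank_ker]
      simp [Module.finrank_pi]
    have h2 : Module.finrank ℝ (LinearMap.range S) ≤ Fintype.card {v // Qp v} := by
      have := Submodule.finrank_le (LinearMap.range S)
      simpa [Module.finrank_pi] using this
    omega
  have hinj2 : Module.finrank ℝ K ≤ Module.finrank ℝ (LinearMap.ker
      ((Matrix.diagonal (fun v => (G.degree v : ℝ)) - G.adjMatrix ℝ - 1)).mulVecLin) := by
    apply LinearMap.finrank_le_finrank_of_injective
      (f := (Ψ.comp K.subtype).codRestrict _ (fun z => hker ↑z z.2))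
    intro a b hab
    have : Ψ ↑a = Ψ ↑b := congrArg Subtype.val hab
    exact Subtype.ext (Ψinj this)
  calc pendantPathCount G 1 - pendantAttachCount G 1
      ≤ Fintype.card {u // Pp u} - Fintype.card {v // Qp v} := by
        rw [hq]; omega
    _ ≤ Module.finrank ℝ K := hdimK
    _ ≤ _ := hinj2

end Comb

end Aux

/-- For any graph `G`, the number `1` is a Laplacian eigenvalue of `G` with multiplicity
at least `p₁(G) - q₁(G)`, where `p₁(G)` counts pendant paths of length `1` (pendant
vertices attached to a vertex of degree `≥ 3`) and `q₁(G)` counts vertices of degree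
`≥ 3` adjacent to at least one pendant vertex. -/
theorem laplacian_one_eigenvalue {V : Type*} [Fintype V] [DecidableEq V]
    (G : SimpleGraph V) [DecidableRel G.Adj] :
    pendantPathCount G 1 - pendantAttachCount G 1 ≤
      Polynomial.rootMultiplicity (1 : ℝ)
        (Matrix.charpoly (Matrix.diagonal (fun v => (G.degree v : ℝ)) - G.adjMatrix ℝ)) := by
  have hA : (Matrix.diagonal (fun v => (G.degree v : ℝ)) - G.adjMatrix ℝ).IsHermitian := by
    ext i j
    simp only [Matrix.conjTranspose_apply, Matrix.sub_apply, star_sub, star_trivial,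
      Matrix.diagonal_apply, SimpleGraph.adjMatrix_apply]
    congr 1
    · by_cases h : i = j
      · subst h; rfl
      · have h' : ¬ j = i := fun hh => h hh.symm
        simp [h, h']
    · by_cases h : G.Adj i j
      · simp [h, h.symm]
      · have h' : ¬ G.Adj j i := fun hh => h hh.symm
        simp [h, h']
  calc pendantPathCount G 1 - pendantAttachCount G 1
      ≤ Module.finrank ℝ (LinearMap.ker
          ((Matrix.diagonal (fun v => (G.degree v : ℝ)) - G.adjMatrix ℝ - 1)).mulVecLin) :=
        comb_le G
    _ ≤ _ := key_spec hA
end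

section
/- Let G be a graph with subdivision graph G̃. For any k ≥ 1 and 1 ≤ i ≤ 2k, the number 2·cos(πi/(2k+1)) is an adjacency eigenvalue of G̃ with multiplicity at least p_k(G) − q_k(G). -/
open Matrix Polynomial Real

/-- The subdivision graph of `G`: each edge `uv` is replaced by a new vertex (indexed by
the edge itself) joined to `u` and `v`. -/
def subdivision {V : Type*} (G : SimpleGraph V) : SimpleGraph (V ⊕ G.edgeSet) where
  Adj x y :=
    (∃ v e, x = Sum.inl v ∧ y = Sum.inr e ∧ v ∈ (e : Sym2 V)) ∨
      (∃ v e, y = Sum.inl v ∧ x = Sum.inr e ∧ v ∈ (e : Sym2 V))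
  symm := ⟨fun x y h =>
    h.elim (fun ⟨v, e, h1, h2, h3⟩ => Or.inr ⟨v, e, h1, h2, h3⟩)
      (fun ⟨v, e, h1, h2, h3⟩ => Or.inl ⟨v, e, h1, h2, h3⟩)⟩
  loopless := ⟨fun x h => by
    rcases h with ⟨v, e, h1, h2, _⟩ | ⟨v, e, h1, h2, _⟩ <;> subst h1 <;> simp_all⟩

noncomputable instance {V : Type*} (G : SimpleGraph V) :
    DecidableRel (subdivision G).Adj := Classical.decRel _

open SimpleGraph Walk

set_option linter.unusedVariables false

lemma charpoly_sub_smul_one {n : Type*} [Fintype n] [DecidableEq n]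
    (M : Matrix n n ℝ) (μ : ℝ) :
    (M - μ • 1).charpoly = (M.charpoly).comp (X + C μ) := by
  let α : ℝ[X] →+* ℝ[X] := (aeval (X + C μ : ℝ[X])).toRingHom
  have hmap : (charmatrix M).map α = charmatrix (M - μ • 1) := by
    ext i j
    by_cases h : i = j
    · subst h
      simp [α, charmatrix_apply_eq, Matrix.sub_apply, Matrix.smul_apply, Matrix.one_apply_eq]
      ring
    · simp [α, charmatrix_apply_ne _ _ _ h, Matrix.sub_apply, Matrix.smul_apply,
        Matrix.one_apply_ne h]
  have : α M.charpoly = (M - μ • 1).charpoly := by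
    rw [Matrix.charpoly, Matrix.charpoly, ← hmap, RingHom.map_det, RingHom.mapMatrix_apply]
  rw [← this]
  show (aeval (X + C μ : ℝ[X])) M.charpoly = _
  rw [Polynomial.comp, aeval_def, Polynomial.algebraMap_eq]

lemma card_le_rootMultiplicity_s15 {n : Type*} [Fintype n] [DecidableEq n]
    (M : Matrix n n ℝ) (μ : ℝ) {ι : Type*} [Fintype ι] (x : ι → n → ℝ)
    (hx : LinearIndependent ℝ x) (hMx : ∀ j, M *ᵥ x j = μ • x j) :
    Fintype.card ι ≤ (M.charpoly).rootMultiplicity μ := by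
  classical
  set N : Matrix n n ℝ := M - μ • 1 with hN
  set ψ : Module.End ℝ (n → ℝ) := Matrix.toLin (Pi.basisFun ℝ n) (Pi.basisFun ℝ n) N with hψ
  have hψapp : ∀ y, ψ y = N *ᵥ y := by
    intro y; rw [hψ, Matrix.toLin_eq_toLin', Matrix.toLin'_apply]
  have hker : ∀ j, x j ∈ ψ.maxGenEigenspace 0 := by
    intro j
    rw [Module.End.mem_maxGenEigenspace]
    refine ⟨1, ?_⟩
    simp only [zero_smul, sub_zero, pow_one]
    rw [hψapp, hN, Matrix.sub_mulVec, hMx j, Matrix.smul_mulVec, Matrix.one_mulVec,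
      sub_self]
  have hle : Fintype.card ι ≤ Module.finrank ℝ (ψ.maxGenEigenspace 0) := by
    have hli : LinearIndependent ℝ (fun j => (⟨x j, hker j⟩ : ψ.maxGenEigenspace 0)) := by
      apply LinearIndependent.of_comp (ψ.maxGenEigenspace 0).subtype
      exact hx
    simpa using hli.fintype_card_le_finrank
  have hfr : Module.finrank ℝ (ψ.maxGenEigenspace 0) = natTrailingDegree ψ.charpoly :=
    LinearMap.finrank_maxGenEigenspace_zero_eq ψ
  have hch : ψ.charpoly = N.charpoly := by
    rw [← LinearMap.charpoly_toMatrix ψ (Pi.basisFun ℝ n), hψ, LinearMap.toMatrix_toLin]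
  rw [rootMultiplicity_eq_natTrailingDegree, ← charpoly_sub_smul_one, ← hN, ← hch, ← hfr]
  exact hle

section Aux

variable {V : Type*} {G : SimpleGraph V}

lemma getVert_inj {u v : V} (p : G.Walk u v) (hp : p.IsPath) :
    ∀ {j l : ℕ}, j ≤ p.length → l ≤ p.length → p.getVert j = p.getVert l → j = l := by
  induction p with
  | nil => intro j l hj hl _; simp at hj hl; omega
  | @cons a b c hab q ih =>
    intro j l hj hl h
    rw [SimpleGraph.Walk.cons_isPath_iff] at hp
    match j, l with
    | 0, 0 => rfl
    | 0, l + 1 =>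
      exfalso
      apply hp.2
      rw [SimpleGraph.Walk.mem_support_iff_exists_getVert]
      exact ⟨l, by simpa [SimpleGraph.Walk.getVert_cons_succ] using h.symm, by simpa using hl⟩
    | j + 1, 0 =>
      exfalso
      apply hp.2
      rw [SimpleGraph.Walk.mem_support_iff_exists_getVert]
      exact ⟨j, by simpa [SimpleGraph.Walk.getVert_cons_succ] using h, by simpa using hj⟩
    | j + 1, l + 1 =>
      have := ih hp.1 (by simpa using hj) (by simpa using hl)
        (by simpa [SimpleGraph.Walk.getVert_cons_succ] using h)
      omega

lemma mem_edges_iff_exists {u v : V} (p : G.Walk u v) (e : Sym2 V) :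
    e ∈ p.edges ↔ ∃ j, j < p.length ∧ e = s(p.getVert j, p.getVert (j + 1)) := by
  induction p with
  | nil => simp
  | @cons a b c hab q ih =>
    simp only [SimpleGraph.Walk.edges_cons, List.mem_cons, ih, SimpleGraph.Walk.length_cons]
    constructor
    · rintro (rfl | ⟨j, hj, rfl⟩)
      · exact ⟨0, by omega, by simp [SimpleGraph.Walk.getVert_cons_succ]⟩
      · exact ⟨j + 1, by omega, by simp [SimpleGraph.Walk.getVert_cons_succ]⟩
    · rintro ⟨j, hj, rfl⟩
      match j with
      | 0 => left; simp [SimpleGraph.Walk.getVert_cons_succ]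
      | j + 1 => right; exact ⟨j, by omega, by simp [SimpleGraph.Walk.getVert_cons_succ]⟩

lemma edge_idx_inj {u v : V} (p : G.Walk u v) (hp : p.IsPath) {j l : ℕ}
    (hj : j + 1 ≤ p.length) (hl : l + 1 ≤ p.length)
    (h : s(p.getVert j, p.getVert (j + 1)) = s(p.getVert l, p.getVert (l + 1))) : j = l := by
  rw [Sym2.eq_iff] at h
  rcases h with ⟨h1, _⟩ | ⟨h1, h2⟩
  · exact getVert_inj p hp (by omega) (by omega) h1
  · have e1 := getVert_inj p hp (by omega) (by omega) h1
    have e2 := getVert_inj p hp (by omega) (by omega) h2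
    omega

end Aux

section Adj

variable {V : Type*} {G : SimpleGraph V}

@[simp] lemma subdivision_adj_inl_inl (a b : V) :
    ¬ (subdivision G).Adj (Sum.inl a) (Sum.inl b) := by
  simp [subdivision]

@[simp] lemma subdivision_adj_inr_inr (e f : G.edgeSet) :
    ¬ (subdivision G).Adj (Sum.inr e) (Sum.inr f) := by
  simp [subdivision]

@[simp] lemma subdivision_adj_inl_inr (a : V) (e : G.edgeSet) :
    (subdivision G).Adj (Sum.inl a) (Sum.inr e) ↔ a ∈ (e : Sym2 V) := by
  simp [subdivision]

@[simp] lemma subdivision_adj_inr_inl (a : V) (e : G.edgeSet) :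
    (subdivision G).Adj (Sum.inr e) (Sum.inl a) ↔ a ∈ (e : Sym2 V) := by
  simp [subdivision]

end Adj

section MulVec

variable {V : Type*} [Fintype V] [DecidableEq V] {G : SimpleGraph V} [DecidableRel G.Adj]

lemma subdiv_mulVec_inl (f : V ⊕ G.edgeSet → ℝ) (a : V) :
    ((subdivision G).adjMatrix ℝ *ᵥ f) (Sum.inl a)
      = ∑ e : G.edgeSet, if a ∈ (e : Sym2 V) then f (Sum.inr e) else 0 := by
  rw [SimpleGraph.adjMatrix_mulVec_apply]
  rw [← Finset.sum_filter, SimpleGraph.neighborFinset_def]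
  rw [show ((subdivision G).neighborSet (Sum.inl a)).toFinset
      = Finset.univ.filter (fun y => (subdivision G).Adj (Sum.inl a) y) by
    ext y; simp [SimpleGraph.mem_neighborSet]]
  rw [Finset.sum_filter, Fintype.sum_sum_type]
  simp [Finset.sum_filter]

lemma subdiv_mulVec_inr (f : V ⊕ G.edgeSet → ℝ) (e : G.edgeSet) :
    ((subdivision G).adjMatrix ℝ *ᵥ f) (Sum.inr e)
      = ∑ b : V, if b ∈ (e : Sym2 V) then f (Sum.inl b) else 0 := by
  rw [SimpleGraph.adjMatrix_mulVec_apply]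
  rw [← Finset.sum_filter, SimpleGraph.neighborFinset_def]
  rw [show ((subdivision G).neighborSet (Sum.inr e)).toFinset
      = Finset.univ.filter (fun y => (subdivision G).Adj (Sum.inr e) y) by
    ext y; simp [SimpleGraph.mem_neighborSet]]
  rw [Finset.sum_filter, Fintype.sum_sum_type]
  simp [Finset.sum_filter]

lemma sum_mem_sym2 {x y : V} (hxy : x ≠ y) (h : V → ℝ) :
    (∑ b : V, if b ∈ (s(x, y) : Sym2 V) then h b else 0) = h x + h y := by
  have : ∀ b : V, (if b ∈ (s(x, y) : Sym2 V) then h b else 0)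
      = (if b = x then h b else 0) + (if b = y then h b else 0) := by
    intro b
    by_cases hbx : b = x <;> by_cases hby : b = y <;>
      simp_all [Sym2.mem_iff]
  rw [Finset.sum_congr rfl (fun b _ => this b), Finset.sum_add_distrib,
    Finset.sum_ite_eq' Finset.univ x h, Finset.sum_ite_eq' Finset.univ y h]
  simp

end MulVec

set_option linter.unusedSectionVars false
section Pvec

variable {V : Type*} [Fintype V] [DecidableEq V] {G : SimpleGraph V} [DecidableRel G.Adj]

/-- The partial eigenvector supported on (the subdivision of) a pendant path. -/
noncomputable def pvec {u vv : V} (w : G.Walk u vv) (k : ℕ) (θ : ℝ) :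
    V ⊕ G.edgeSet → ℝ
  | Sum.inl a =>
      if h : ∃ j, j < k ∧ w.getVert j = a
        then Real.sin ((2 * (h.choose : ℝ) + 1) * θ) else 0
  | Sum.inr e =>
      if h : ∃ j, j < k ∧ (e : Sym2 V) = s(w.getVert j, w.getVert (j + 1))
        then Real.sin ((2 * (h.choose : ℝ) + 2) * θ) else 0

variable {u vv : V} {w : G.Walk u vv} {k : ℕ} {θ : ℝ}

lemma pvec_inl_eq (hp : w.IsPath) (hlen : w.length = k) {j : ℕ} (hj : j < k) :
    pvec w k θ (Sum.inl (w.getVert j)) = Real.sin ((2 * (j : ℝ) + 1) * θ) := by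
  have h : ∃ l, l < k ∧ w.getVert l = w.getVert j := ⟨j, hj, rfl⟩
  have hch : h.choose = j := by
    have := h.choose_spec
    exact getVert_inj w hp (by omega) (by omega) this.2
  simp only [pvec, dif_pos h, hch]

lemma pvec_inl_zero {a : V} (h : ¬ ∃ j, j < k ∧ w.getVert j = a) :
    pvec w k θ (Sum.inl a) = 0 := by
  simp only [pvec, dif_neg h]

lemma pvec_inr_eq (hp : w.IsPath) (hlen : w.length = k) {e : G.edgeSet} {m : ℕ}
    (hm : m < k) (he : (e : Sym2 V) = s(w.getVert m, w.getVert (m + 1))) :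
    pvec w k θ (Sum.inr e) = Real.sin ((2 * (m : ℝ) + 2) * θ) := by
  have h : ∃ l, l < k ∧ (e : Sym2 V) = s(w.getVert l, w.getVert (l + 1)) := ⟨m, hm, he⟩
  have hch : h.choose = m := by
    have hs := h.choose_spec
    exact edge_idx_inj w hp (by omega) (by omega) (hs.2.symm.trans he)
  simp only [pvec, dif_pos h, hch]

lemma pvec_inr_zero {e : G.edgeSet}
    (h : ¬ ∃ j, j < k ∧ (e : Sym2 V) = s(w.getVert j, w.getVert (j + 1))) :
    pvec w k θ (Sum.inr e) = 0 := by
  simp only [pvec, dif_neg h]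

/-- The incident edges of an internal vertex of a pendant path are edges of the path. -/
lemma pendant_incidence (hw : IsPendantPath G w k) {j : ℕ} (hj : j < k)
    (e : Sym2 V) (he : e ∈ G.edgeSet) (hme : w.getVert j ∈ e) :
    e = s(w.getVert j, w.getVert (j + 1)) ∨
      ∃ m, j = m + 1 ∧ e = s(w.getVert m, w.getVert (m + 1)) := by
  obtain ⟨hp, hlen, hu, hv, hint⟩ := hw
  have hadj : ∀ l, l < k → G.Adj (w.getVert l) (w.getVert (l + 1)) := fun l hl =>
    w.adj_getVert_succ (by omega)
  have hincmem : e ∈ G.incidenceFinset (w.getVert j) := by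
    rw [SimpleGraph.mem_incidenceFinset]
    exact ⟨he, hme⟩
  match j with
  | 0 =>
    left
    have h1 : s(w.getVert 0, w.getVert 1) ∈ G.incidenceFinset (w.getVert 0) := by
      rw [SimpleGraph.mem_incidenceFinset]
      exact ⟨(hadj 0 hj).symm.symm, Sym2.mem_mk_left _ _⟩
    have hcard : (G.incidenceFinset (w.getVert 0)).card ≤ 1 := by
      rw [SimpleGraph.card_incidenceFinset_eq_degree]
      rw [w.getVert_zero, hu]
    exact Finset.card_le_one.mp hcard e hincmem _ h1
  | m + 1 =>
    have hdeg : G.degree (w.getVert (m + 1)) = 2 := by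
      apply hint
      · rw [SimpleGraph.Walk.mem_support_iff_exists_getVert]
        exact ⟨m + 1, rfl, by omega⟩
      · intro hh
        have := getVert_inj w hp (j := m + 1) (l := 0) (by omega) (by omega)
          (hh.trans w.getVert_zero.symm)
        omega
      · intro hh
        have := getVert_inj w hp (j := m + 1) (l := w.length) (by omega) (by omega)
          (hh.trans w.getVert_length.symm)
        omega
    set e1 : Sym2 V := s(w.getVert m, w.getVert (m + 1)) with he1
    set e2 : Sym2 V := s(w.getVert (m + 1), w.getVert (m + 2)) with he2
    have h1 : e1 ∈ G.incidenceFinset (w.getVert (m + 1)) := by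
      rw [SimpleGraph.mem_incidenceFinset]
      exact ⟨(hadj m (by omega)), Sym2.mem_mk_right _ _⟩
    have h2 : e2 ∈ G.incidenceFinset (w.getVert (m + 1)) := by
      rw [SimpleGraph.mem_incidenceFinset]
      exact ⟨(hadj (m + 1) (by omega)), Sym2.mem_mk_left _ _⟩
    have h12 : e1 ≠ e2 := by
      rw [he1, he2]
      intro hh
      have := edge_idx_inj w hp (by omega) (by omega) hh
      omega
    have hsub : ({e1, e2} : Finset (Sym2 V)) ⊆ G.incidenceFinset (w.getVert (m + 1)) := by
      intro x hx
      rcases Finset.mem_insert.mp hx with rfl | hx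
      · exact h1
      · rw [Finset.mem_singleton.mp hx]; exact h2
    have hcard : (G.incidenceFinset (w.getVert (m + 1))).card ≤ ({e1, e2} : Finset (Sym2 V)).card := by
      rw [SimpleGraph.card_incidenceFinset_eq_degree, hdeg,
        Finset.card_insert_of_notMem (by simp [h12]), Finset.card_singleton]
    have heq := Finset.eq_of_subset_of_card_le hsub hcard
    rw [← heq] at hincmem
    rcases Finset.mem_insert.mp hincmem with rfl | hx
    · right; exact ⟨m, rfl, rfl⟩
    · left; rw [Finset.mem_singleton.mp hx]

lemma sin_rec (m θ : ℝ) :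
    Real.sin (m * θ) + Real.sin ((m + 2) * θ) = 2 * Real.cos θ * Real.sin ((m + 1) * θ) := by
  have e1 : m * θ = (m + 1) * θ - θ := by ring
  have e2 : (m + 2) * θ = (m + 1) * θ + θ := by ring
  rw [e1, e2, Real.sin_sub, Real.sin_add]
  ring

end Pvec

section Eigen

variable {V : Type*} [Fintype V] [DecidableEq V] {G : SimpleGraph V} [DecidableRel G.Adj]
variable {u vv : V} {w : G.Walk u vv} {k : ℕ} {θ : ℝ}

lemma pvec_mulVec (hw : IsPendantPath G w k) (hk : 1 ≤ k)
    (hsin : Real.sin ((2 * (k : ℝ) + 1) * θ) = 0) (x : V ⊕ G.edgeSet) :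
    ((subdivision G).adjMatrix ℝ *ᵥ pvec w k θ) x
      = 2 * Real.cos θ * pvec w k θ x
        + (if x = Sum.inl vv then Real.sin (2 * (k : ℝ) * θ) else 0) := by
  have hp : w.IsPath := hw.1
  have hlen : w.length = k := hw.2.1
  have hadj : ∀ l, l < k → G.Adj (w.getVert l) (w.getVert (l + 1)) := fun l hl =>
    w.adj_getVert_succ (by omega)
  have hvk : vv = w.getVert k := by rw [← hlen, w.getVert_length]
  cases x with
  | inl a =>
    rw [subdiv_mulVec_inl]
    by_cases hex : ∃ j, j < k ∧ w.getVert j = a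
    · obtain ⟨j, hj, rfl⟩ := hex
      have hav : (Sum.inl (w.getVert j) : V ⊕ G.edgeSet) ≠ Sum.inl vv := by
        intro hh
        have := getVert_inj w hp (j := j) (l := k) (by omega) (by omega)
          ((Sum.inl.inj hh).trans hvk)
        omega
      rw [if_neg hav, add_zero]
      match j, hj with
      | 0, hj =>
        set E0 : G.edgeSet := ⟨s(w.getVert 0, w.getVert 1), hadj 0 hj⟩ with hE0
        have hpoint : ∀ e : G.edgeSet,
            (if w.getVert 0 ∈ (e : Sym2 V) then pvec w k θ (Sum.inr e) else 0)
              = (if e = E0 then Real.sin ((2 * (0 : ℝ) + 2) * θ) else 0) := by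
          intro e
          by_cases hme : w.getVert 0 ∈ (e : Sym2 V)
          · rcases pendant_incidence hw hj (e : Sym2 V) e.2 hme with hee | ⟨m, hm0, _⟩
            · have heE : e = E0 := Subtype.ext hee
              rw [if_pos hme, if_pos heE, pvec_inr_eq hp hlen hj hee]
              norm_num
            · omega
          · have hne : e ≠ E0 := by
              intro hh
              apply hme
              rw [hh, hE0]
              exact Sym2.mem_mk_left _ _
            rw [if_neg hme, if_neg hne]
        rw [Finset.sum_congr rfl (fun e _ => hpoint e), Finset.sum_ite_eq' Finset.univ E0,
          if_pos (Finset.mem_univ _), pvec_inl_eq hp hlen hj]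
        norm_num
        rw [show (2 : ℝ) * θ = 2 * θ from rfl, Real.sin_two_mul]
        ring
      | m + 1, hj =>
        set E1 : G.edgeSet := ⟨s(w.getVert m, w.getVert (m + 1)), hadj m (by omega)⟩ with hE1
        set E2 : G.edgeSet := ⟨s(w.getVert (m + 1), w.getVert (m + 2)), hadj (m + 1) hj⟩ with hE2
        have hne12 : E1 ≠ E2 := by
          intro hh
          have := edge_idx_inj w hp (j := m) (l := m + 1) (by omega) (by omega)
            (congrArg Subtype.val hh)
          omega
        have hpoint : ∀ e : G.edgeSet,
            (if w.getVert (m + 1) ∈ (e : Sym2 V) then pvec w k θ (Sum.inr e) else 0)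
              = (if e = E1 then Real.sin ((2 * (m : ℝ) + 2) * θ) else 0)
                + (if e = E2 then Real.sin ((2 * (m : ℝ) + 4) * θ) else 0) := by
          intro e
          by_cases hme : w.getVert (m + 1) ∈ (e : Sym2 V)
          · rcases pendant_incidence hw hj (e : Sym2 V) e.2 hme with hee | ⟨m', hmm, hee⟩
            · have heE : e = E2 := Subtype.ext hee
              have hneE1 : e ≠ E1 := by rw [heE]; exact hne12.symm
              rw [if_pos hme, if_neg hneE1, if_pos heE, pvec_inr_eq hp hlen hj hee]
              push_cast
              ring_nf
            · rw [show m' = m by omega] at hee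
              have heE : e = E1 := Subtype.ext hee
              have hneE2 : e ≠ E2 := by rw [heE]; exact hne12
              rw [if_pos hme, if_pos heE, if_neg hneE2,
                pvec_inr_eq hp hlen (show m < k by omega) hee, add_zero]
          · have hne1 : e ≠ E1 := by
              intro hh; apply hme; rw [hh, hE1]; exact Sym2.mem_mk_right _ _
            have hne2 : e ≠ E2 := by
              intro hh; apply hme; rw [hh, hE2]; exact Sym2.mem_mk_left _ _
            rw [if_neg hme, if_neg hne1, if_neg hne2, add_zero]
        rw [Finset.sum_congr rfl (fun e _ => hpoint e), Finset.sum_add_distrib,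
          Finset.sum_ite_eq' Finset.univ E1, Finset.sum_ite_eq' Finset.univ E2,
          if_pos (Finset.mem_univ _), if_pos (Finset.mem_univ _),
          pvec_inl_eq hp hlen hj]
        push_cast
        have h := sin_rec (2 * (m : ℝ) + 2) θ
        have e1 : (2 * (m : ℝ) + 2 + 2) = 2 * (m : ℝ) + 4 := by ring
        have e2 : (2 * (m : ℝ) + 2 + 1) = 2 * ((m : ℝ) + 1) + 1 := by ring
        rw [e1, e2] at h
        exact h
    · by_cases hva : a = vv
      · subst hva
        rw [if_pos rfl]
        have hk1 : k - 1 < k := by omega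
        have hgk : w.getVert ((k - 1) + 1) = a := by
          rw [show (k - 1) + 1 = k by omega, ← hvk]
        set Ek : G.edgeSet := ⟨s(w.getVert (k - 1), w.getVert (k - 1 + 1)), hadj (k - 1) hk1⟩
          with hEk
        have hpoint : ∀ e : G.edgeSet,
            (if a ∈ (e : Sym2 V) then pvec w k θ (Sum.inr e) else 0)
              = (if e = Ek then Real.sin (2 * (k : ℝ) * θ) else 0) := by
          intro e
          by_cases hme : a ∈ (e : Sym2 V)
          · by_cases hee : ∃ j, j < k ∧ (e : Sym2 V) = s(w.getVert j, w.getVert (j + 1))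
            · obtain ⟨j, hjk, hej⟩ := hee
              have haj : a = w.getVert j ∨ a = w.getVert (j + 1) := by
                rw [hej] at hme
                rcases Sym2.mem_iff.mp hme with h | h
                · exact Or.inl h
                · exact Or.inr h
              have hjj : j = k - 1 := by
                rcases haj with h | h
                · exact absurd ⟨j, hjk, h.symm⟩ hex
                · have := getVert_inj w hp (j := j + 1) (l := k) (by omega) (by omega)
                    (h.symm.trans hvk)
                  omega
              subst hjj
              have heE : e = Ek := Subtype.ext hej
              rw [if_pos hme, if_pos heE, pvec_inr_eq hp hlen hk1 hej,
                Nat.cast_sub (show 1 ≤ k by omega)]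
              congr 1
              push_cast
              ring
            · have hnE : e ≠ Ek := by
                intro hh
                exact hee ⟨k - 1, hk1, by rw [hh]⟩
              rw [if_pos hme, if_neg hnE, pvec_inr_zero hee]
          · have hnE : e ≠ Ek := by
              intro hh
              apply hme
              rw [hh, hEk]
              exact Sym2.mem_iff.mpr (Or.inr hgk.symm)
            rw [if_neg hme, if_neg hnE]
        rw [Finset.sum_congr rfl (fun e _ => hpoint e), Finset.sum_ite_eq' Finset.univ Ek,
          if_pos (Finset.mem_univ _), pvec_inl_zero hex]
        ring
      · rw [if_neg (fun hh => hva (Sum.inl.inj hh)), pvec_inl_zero hex]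
        have hpoint : ∀ e : G.edgeSet,
            (if a ∈ (e : Sym2 V) then pvec w k θ (Sum.inr e) else 0) = 0 := by
          intro e
          by_cases hme : a ∈ (e : Sym2 V)
          · rw [if_pos hme]
            apply pvec_inr_zero
            rintro ⟨j, hjk, hej⟩
            have haj : a = w.getVert j ∨ a = w.getVert (j + 1) := by
              rw [hej] at hme
              rcases Sym2.mem_iff.mp hme with h | h
              · exact Or.inl h
              · exact Or.inr h
            rcases haj with h | h
            · exact hex ⟨j, hjk, h.symm⟩
            · by_cases hj1 : j + 1 < k
              · exact hex ⟨j + 1, hj1, h.symm⟩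
              · have hje : j + 1 = k := by omega
                rw [hje] at h
                exact hva (h.trans hvk.symm)
          · rw [if_neg hme]
        rw [Finset.sum_congr rfl (fun e _ => hpoint e), Finset.sum_const_zero]
        ring
  | inr e =>
    rw [subdiv_mulVec_inr, if_neg (by simp), add_zero]
    by_cases hex : ∃ m, m < k ∧ (e : Sym2 V) = s(w.getVert m, w.getVert (m + 1))
    · obtain ⟨m, hm, he⟩ := hex
      have hne : w.getVert m ≠ w.getVert (m + 1) := by
        intro hh
        have := getVert_inj w hp (j := m) (l := m + 1) (by omega) (by omega) hh
        omega
      simp_rw [he]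
      rw [sum_mem_sym2 hne, pvec_inl_eq hp hlen hm, pvec_inr_eq hp hlen hm he]
      by_cases hm1 : m + 1 < k
      · rw [pvec_inl_eq hp hlen hm1]
        push_cast
        have h := sin_rec (2 * (m : ℝ) + 1) θ
        have e1 : (2 * (m : ℝ) + 1 + 2) = 2 * ((m : ℝ) + 1) + 1 := by ring
        have e2 : (2 * (m : ℝ) + 1 + 1) = 2 * (m : ℝ) + 2 := by ring
        rw [e1, e2] at h
        exact h
      · have hmk : m + 1 = k := by omega
        have hz : pvec w k θ (Sum.inl (w.getVert (m + 1))) = 0 := by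
          apply pvec_inl_zero
          rintro ⟨j, hjk, hgj⟩
          have := getVert_inj w hp (j := j) (l := m + 1) (by omega) (by omega) hgj
          omega
        rw [hz, add_zero]
        have h := sin_rec (2 * (m : ℝ) + 1) θ
        have hmr : (m : ℝ) = (k : ℝ) - 1 := by
          have : ((m : ℕ) : ℝ) + 1 = (k : ℝ) := by exact_mod_cast congrArg (Nat.cast : ℕ → ℝ) hmk
          linarith
        have e1 : (2 * (m : ℝ) + 1 + 2) = 2 * (k : ℝ) + 1 := by rw [hmr]; ring
        have e2 : (2 * (m : ℝ) + 1 + 1) = 2 * (m : ℝ) + 2 := by ring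
        rw [e1, e2, hsin] at h
        linarith
    · rw [pvec_inr_zero hex]
      have hpoint : ∀ b : V,
          (if b ∈ (e : Sym2 V) then pvec w k θ (Sum.inl b) else 0) = 0 := by
        intro b
        by_cases hbe : b ∈ (e : Sym2 V)
        · rw [if_pos hbe]
          apply pvec_inl_zero
          rintro ⟨j, hjk, rfl⟩
          rcases pendant_incidence hw hjk (e : Sym2 V) e.2 hbe with hee | ⟨m', hj', hee⟩
          · exact hex ⟨j, hjk, hee⟩
          · exact hex ⟨m', by omega, hee⟩
        · rw [if_neg hbe]
      rw [Finset.sum_congr rfl (fun b _ => hpoint b), Finset.sum_const_zero]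
      ring

end Eigen

section Assemble

variable {V : Type*} [Fintype V] [DecidableEq V] {G : SimpleGraph V} [DecidableRel G.Adj]

lemma walk_eq_of_length_eq {a va vb : V} (p : G.Walk a va) (q : G.Walk a vb)
    (hp : p.IsPath) (hq : q.IsPath) (hlen : p.length = q.length)
    (hdp : ∀ x ∈ p.support, x ≠ va → G.degree x ≤ 2)
    (hdq : ∀ x ∈ q.support, x ≠ vb → G.degree x ≤ 2)
    (hva : 3 ≤ G.degree va) (hvb : 3 ≤ G.degree vb)
    (hstart : G.degree a = 1 ∨ ∃ c, G.Adj c a ∧ c ∉ p.support ∧ c ∉ q.support) :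
    (⟨va, p⟩ : Σ x, G.Walk a x) = ⟨vb, q⟩ := by
  induction p generalizing vb with
  | nil =>
    cases q with
    | nil => rfl
    | cons h q' => simp at hlen
  | @cons a b va hab p' ih =>
    cases q with
    | nil => simp at hlen
    | @cons _ b' _ hab' q' =>
      rw [SimpleGraph.Walk.cons_isPath_iff] at hp hq
      have hbb' : b = b' := by
        by_contra hne
        rcases hstart with h1 | ⟨c, hca, hcp, hcq⟩
        · have hb : b ∈ G.neighborFinset a := by rw [SimpleGraph.mem_neighborFinset]; exact hab
          have hb' : b' ∈ G.neighborFinset a := by rw [SimpleGraph.mem_neighborFinset]; exact hab'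
          have h2 : (G.neighborFinset a).card ≤ 1 := by
            rw [SimpleGraph.card_neighborFinset_eq_degree, h1]
          exact hne (Finset.card_le_one.mp h2 b hb b' hb')
        · have hcb : c ≠ b := by
            rintro rfl
            exact hcp (by simp [SimpleGraph.Walk.support_cons])
          have hcb' : c ≠ b' := by
            rintro rfl
            exact hcq (by simp [SimpleGraph.Walk.support_cons])
          have hsub : ({c, b, b'} : Finset V) ⊆ G.neighborFinset a := by
            intro x hx
            rw [SimpleGraph.mem_neighborFinset]
            simp only [Finset.mem_insert, Finset.mem_singleton] at hx
            rcases hx with rfl | rfl | rfl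
            · exact hca.symm
            · exact hab
            · exact hab'
          have hcard : ({c, b, b'} : Finset V).card = 3 := by
            rw [Finset.card_insert_of_notMem (by simp [hcb, hcb']),
              Finset.card_insert_of_notMem (by simp [hne]), Finset.card_singleton]
          have hdega : G.degree a ≤ 2 := by
            refine hdp a (by simp [SimpleGraph.Walk.support_cons]) ?_
            rintro rfl
            exact hp.2 (SimpleGraph.Walk.end_mem_support p')
          have := Finset.card_le_card hsub
          rw [hcard, SimpleGraph.card_neighborFinset_eq_degree] at this
          omega
      subst hbb'
      have hdp' : ∀ x ∈ p'.support, x ≠ va → G.degree x ≤ 2 := by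
        intro x hx hxva
        exact hdp x (by simp [SimpleGraph.Walk.support_cons, hx]) hxva
      have hdq' : ∀ x ∈ q'.support, x ≠ vb → G.degree x ≤ 2 := by
        intro x hx hxvb
        exact hdq x (by simp [SimpleGraph.Walk.support_cons, hx]) hxvb
      have key := ih q' hp.1 hq.1 (by simpa using hlen) hdp' hdq'
        hva hvb (Or.inr ⟨a, hab, hp.2, hq.2⟩)
      obtain ⟨rfl, h2⟩ := Sigma.mk.inj_iff.mp key
      rw [eq_of_heq h2]

lemma pendant_deg_le {u1 v1 : V} {w1 : G.Walk u1 v1} {k : ℕ} (h1 : IsPendantPath G w1 k) :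
    ∀ x ∈ w1.support, x ≠ v1 → G.degree x ≤ 2 := by
  intro x hx hxv
  by_cases hxu : x = u1
  · subst hxu
    rw [h1.2.2.1]
    omega
  · rw [h1.2.2.2.2 x hx hxu hxv]

lemma pvec_leaf_vanish {u1 v1 u2 v2 : V} {w1 : G.Walk u1 v1} {w2 : G.Walk u2 v2} {k : ℕ} {θ : ℝ}
    (h1 : IsPendantPath G w1 k) (h2 : IsPendantPath G w2 k) (hk : 1 ≤ k)
    (hne : (⟨u1, v1, w1⟩ : (u : V) × (v : V) × G.Walk u v) ≠ ⟨u2, v2, w2⟩) :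
    pvec w2 k θ (Sum.inl u1) = 0 := by
  apply pvec_inl_zero
  rintro ⟨j, hj, hgj⟩
  match j, hj with
  | 0, hj =>
    rw [w2.getVert_zero] at hgj
    subst hgj
    have key := walk_eq_of_length_eq w1 w2 h1.1 h2.1
      (h1.2.1.trans h2.2.1.symm) (pendant_deg_le h1) (pendant_deg_le h2)
      h1.2.2.2.1 h2.2.2.2.1 (Or.inl h1.2.2.1)
    obtain ⟨rfl, hheq⟩ := Sigma.mk.inj_iff.mp key
    exact hne (by rw [eq_of_heq hheq])
  | m + 1, hj =>
    have hmem : w2.getVert (m + 1) ∈ w2.support := by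
      rw [SimpleGraph.Walk.mem_support_iff_exists_getVert]
      exact ⟨m + 1, rfl, by rw [h2.2.1]; omega⟩
    have hnu : w2.getVert (m + 1) ≠ u2 := by
      intro hh
      have := getVert_inj w2 h2.1 (j := m + 1) (l := 0) (by rw [h2.2.1]; omega)
        (by omega) (by rw [hh, w2.getVert_zero])
      omega
    have hnv : w2.getVert (m + 1) ≠ v2 := by
      intro hh
      have := getVert_inj w2 h2.1 (j := m + 1) (l := w2.length) (by rw [h2.2.1]; omega)
        (by omega) (by rw [hh, w2.getVert_length])
      rw [h2.2.1] at this
      omega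
    have hdeg2 := h2.2.2.2.2 _ hmem hnu hnv
    rw [hgj] at hdeg2
    rw [h1.2.2.1] at hdeg2
    omega

end Assemble

/-- For any `k ≥ 1` and `1 ≤ i ≤ 2k`, the number `2 cos (π i/(2k+1))` is an adjacency
eigenvalue of the subdivision graph of `G` with multiplicity at least `p_k(G) - q_k(G)`. -/
theorem subdivision_adj_pendant_eigenvalue {V : Type*} [Fintype V] [DecidableEq V]
    (G : SimpleGraph V) [DecidableRel G.Adj] (k i : ℕ) (hk : 1 ≤ k) (hi : 1 ≤ i)
    (hik : i ≤ 2 * k) :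
    pendantPathCount G k - pendantAttachCount G k ≤
      Polynomial.rootMultiplicity (2 * Real.cos (π * i / (2 * k + 1)))
        (Matrix.charpoly ((subdivision G).adjMatrix ℝ)) := by
  classical
  set θ : ℝ := π * i / (2 * k + 1) with hθ
  have hden : (2 * (k : ℝ) + 1) ≠ 0 := by positivity
  have hsin0 : Real.sin ((2 * (k : ℝ) + 1) * θ) = 0 := by
    rw [hθ]
    have : (2 * (k : ℝ) + 1) * (π * i / (2 * k + 1)) = i * π := by
      field_simp
    rw [this, Real.sin_nat_mul_pi]
  have hsinθ : Real.sin θ ≠ 0 := by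
    have hpos : 0 < θ := by
      rw [hθ]
      apply div_pos
      · apply mul_pos Real.pi_pos
        exact_mod_cast Nat.lt_of_lt_of_le Nat.zero_lt_one hi
      · positivity
    have hlt : θ < π := by
      rw [hθ, div_lt_iff₀ (by positivity)]
      have : (i : ℝ) < 2 * k + 1 := by exact_mod_cast Nat.lt_succ_of_le hik
      nlinarith [Real.pi_pos]
    exact ne_of_gt (Real.sin_pos_of_pos_of_lt_pi hpos hlt)
  set T := {p : (u : V) × (v : V) × G.Walk u v // IsPendantPath G p.2.2 k} with hT
  have hTfin : Finite T := by
    apply Finite.of_injective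
      (fun t : T => ((t.1.1, t.1.2.1, fun n : Fin k => t.1.2.2.edges[(n : ℕ)]?) :
        V × V × (Fin k → Option (Sym2 V))))
    rintro ⟨⟨ua, va, wa⟩, ha⟩ ⟨⟨ub, vb, wb⟩, hb⟩ h
    simp only [Prod.mk.injEq] at h
    obtain ⟨rfl, rfl, he⟩ := h
    have hlena : wa.edges.length = k := by rw [SimpleGraph.Walk.length_edges, ha.2.1]
    have hlenb : wb.edges.length = k := by rw [SimpleGraph.Walk.length_edges, hb.2.1]
    have hedges : wa.edges = wb.edges := by
      apply List.ext_getElem?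
      intro n
      by_cases hn : n < k
      · exact congrFun he ⟨n, hn⟩
      · rw [List.getElem?_eq_none (by omega), List.getElem?_eq_none (by omega)]
    have := SimpleGraph.Walk.edges_injective hedges
    subst this
    rfl
  haveI : Fintype T := Fintype.ofFinite T
  set Q := {v : V // 3 ≤ G.degree v ∧ ∃ u, ∃ w : G.Walk u v, IsPendantPath G w k} with hQ
  let pr : T → Q := fun t => ⟨t.1.2.1, t.2.2.2.2.1, t.1.1, t.1.2.2, t.2⟩
  have hsurj : Function.Surjective pr := by
    rintro ⟨v, hv, u, w, hw⟩
    exact ⟨⟨⟨u, v, w⟩, hw⟩, rfl⟩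
  set s : Q → T := Function.surjInv hsurj with hsdef
  have hs : ∀ q, pr (s q) = q := Function.surjInv_eq hsurj
  have hsinj : Function.Injective s := Function.injective_surjInv hsurj
  set I := {t : T // t ∉ Set.range s} with hI
  haveI : Fintype I := Fintype.ofFinite I
  -- cardinality
  have hcard : pendantPathCount G k - pendantAttachCount G k ≤ Fintype.card I := by
    have h1 : pendantPathCount G k = Fintype.card T := Nat.card_eq_fintype_card
    have h2 : pendantAttachCount G k = Fintype.card Q := Nat.card_eq_fintype_card
    have h3 : Fintype.card I = Fintype.card T - Fintype.card {t : T // t ∈ Set.range s} :=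
      Fintype.card_subtype_compl _
    have h4 : Fintype.card {t : T // t ∈ Set.range s} = Fintype.card Q :=
      (Fintype.card_congr (Equiv.ofInjective s hsinj)).symm
    rw [h1, h2, h3, h4]
  -- the eigenvectors
  set xv : I → (V ⊕ G.edgeSet) → ℝ :=
    fun t => pvec t.1.1.2.2 k θ - pvec (s (pr t.1)).1.2.2 k θ with hxv
  have heig : ∀ t : I, (subdivision G).adjMatrix ℝ *ᵥ xv t = (2 * Real.cos θ) • xv t := by
    intro t
    have h1 : IsPendantPath G t.1.1.2.2 k := t.1.2
    have h2 : IsPendantPath G (s (pr t.1)).1.2.2 k := (s (pr t.1)).2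
    have hvv : (s (pr t.1)).1.2.1 = t.1.1.2.1 := congrArg Subtype.val (hs (pr t.1))
    funext x
    have e1 := pvec_mulVec h1 hk hsin0 x
    have e2 := pvec_mulVec h2 hk hsin0 x
    have hite : (if x = Sum.inl (s (pr t.1)).1.2.1 then Real.sin (2 * (k : ℝ) * θ) else 0)
        = (if x = Sum.inl t.1.1.2.1 then Real.sin (2 * (k : ℝ) * θ) else 0) := by
      rw [hvv]
    rw [hite] at e2
    have hxvt : xv t = pvec t.1.1.2.2 k θ - pvec (s (pr t.1)).1.2.2 k θ := rfl
    rw [hxvt, Matrix.mulVec_sub, Pi.sub_apply, e1, e2, Pi.smul_apply, Pi.sub_apply,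
      smul_eq_mul]
    ring
  have hli : LinearIndependent ℝ xv := by
    rw [Fintype.linearIndependent_iff]
    intro g hg t
    have hgt := congrFun hg (Sum.inl t.1.1.1)
    rw [Finset.sum_apply, Pi.zero_apply] at hgt
    rw [Finset.sum_eq_single t] at hgt
    · have hxt : xv t (Sum.inl t.1.1.1) = Real.sin θ := by
        have hz : pvec (s (pr t.1)).1.2.2 k θ (Sum.inl t.1.1.1) = 0 := by
          apply pvec_leaf_vanish t.1.2 (s (pr t.1)).2 hk
          intro hh
          exact t.2 ⟨pr t.1, Subtype.ext hh.symm⟩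
        have hfst : pvec t.1.1.2.2 k θ (Sum.inl t.1.1.1) = Real.sin θ := by
          have h1 := pvec_inl_eq (w := t.1.1.2.2) (θ := θ) t.1.2.1 t.1.2.2.1
            (show 0 < k by omega)
          rw [SimpleGraph.Walk.getVert_zero] at h1
          rw [h1]
          norm_num
        rw [hxv]
        simp only [Pi.sub_apply]
        rw [hz, hfst, sub_zero]
      rw [Pi.smul_apply, hxt, smul_eq_mul] at hgt
      rcases mul_eq_zero.mp hgt with h | h
      · exact h
      · exact absurd h hsinθ
    · intro i _ hit
      have hz1 : pvec i.1.1.2.2 k θ (Sum.inl t.1.1.1) = 0 := by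
        apply pvec_leaf_vanish t.1.2 i.1.2 hk
        intro hh
        exact hit (Subtype.ext (Subtype.ext hh.symm))
      have hz2 : pvec (s (pr i.1)).1.2.2 k θ (Sum.inl t.1.1.1) = 0 := by
        apply pvec_leaf_vanish t.1.2 (s (pr i.1)).2 hk
        intro hh
        exact t.2 ⟨pr i.1, Subtype.ext hh.symm⟩
      rw [Pi.smul_apply, hxv]
      simp only [Pi.sub_apply]
      rw [hz1, hz2, sub_zero, smul_eq_mul, mul_zero]
    · intro ht
      exact absurd (Finset.mem_univ t) ht
  have hmain := card_le_rootMultiplicity_s15 ((subdivision G).adjMatrix ℝ) (2 * Real.cos θ)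
    xv hli heig
  exact le_trans hcard hmain
end

section
/- A graph G is bipartite if and only if its Laplacian matrix L(G) = Δ − A and signless Laplacian matrix Q(G) = Δ + A are similar matrices. -/
open Matrix

namespace BipLapAux

open Finset SimpleGraph

variable {V : Type*} [Fintype V] [DecidableEq V] (G : SimpleGraph V) [DecidableRel G.Adj]

lemma quadQ (x : V → ℝ) :
    x ⬝ᵥ ((Matrix.diagonal (fun v => (G.degree v : ℝ)) + G.adjMatrix ℝ) *ᵥ x) =
      (∑ i : V, ∑ j : V, if G.Adj i j then (x i + x j)^2 else 0) / 2 := by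
  show x ⬝ᵥ ((G.degMatrix ℝ + G.adjMatrix ℝ) *ᵥ x) = _
  simp_rw [add_mulVec, dotProduct_add, dotProduct_mulVec_degMatrix,
    dotProduct_mulVec_adjMatrix, ← sum_add_distrib, degree_eq_sum_if_adj, sum_mul, ite_mul,
    one_mul, zero_mul, ← sum_add_distrib, ite_add_ite, add_zero]
  rw [← add_self_div_two (∑ x_1 : V, ∑ x_2 : V, _)]
  conv_lhs => enter [1,2,2,i,2,j]; rw [if_congr (adj_comm G i j) rfl rfl]
  conv_lhs => enter [1,2]; rw [Finset.sum_comm]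
  simp_rw [← sum_add_distrib, ite_add_ite]
  congr 2 with i
  congr 2 with j
  ring_nf

lemma ker_adj {x : V → ℝ}
    (hx : (Matrix.diagonal (fun v => (G.degree v : ℝ)) + G.adjMatrix ℝ) *ᵥ x = 0)
    {i j : V} (h : G.Adj i j) : x j = - x i := by
  have h0 : (∑ i : V, ∑ j : V, if G.Adj i j then (x i + x j)^2 else 0) / 2 = 0 := by
    rw [← quadQ, hx, dotProduct_zero]
  rw [div_eq_zero_iff] at h0
  have h0 : (∑ i : V, ∑ j : V, if G.Adj i j then (x i + x j)^2 else 0) = 0 := by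
    rcases h0 with h0 | h0
    · exact h0
    · norm_num at h0
  have h1 := (Finset.sum_eq_zero_iff_of_nonneg (fun i _ => by positivity)).mp h0 i (mem_univ i)
  have h2 := (Finset.sum_eq_zero_iff_of_nonneg (fun j _ => by positivity)).mp h1 j (mem_univ j)
  rw [if_pos h] at h2
  have := pow_eq_zero_iff (n := 2) (by norm_num) |>.mp h2
  linarith

lemma walk_sign {x : V → ℝ} (hadj : ∀ i j : V, G.Adj i j → x j = - x i)
    {u v : V} (p : G.Walk u v) : x v = (-1 : ℝ)^p.length * x u := by
  induction p with
  | nil => simp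
  | @cons a b c h p ih =>
    rw [SimpleGraph.Walk.length_cons, ih, hadj a b h, pow_succ]
    ring

lemma exists_oddWalk (h : ¬ G.Colorable 2) :
    ∃ (u : V) (p : G.Walk u u), Odd p.length := by
  classical
  by_contra hodd
  push_neg at hodd
  apply h
  have hrep : ∀ v : V, G.Reachable (Quot.out (G.connectedComponentMk v)) v := by
    intro v
    apply ConnectedComponent.exact
    exact Quot.out_eq _
  let c : G.Coloring (ZMod 2) := Coloring.mk
    (fun v => (((hrep v).some.length : ZMod 2))) ?_
  · have := c.colorable
    simpa using this
  · intro u v huv heq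
    have hc : G.connectedComponentMk u = G.connectedComponentMk v :=
      ConnectedComponent.sound huv.reachable
    have hr : Quot.out (G.connectedComponentMk u) = Quot.out (G.connectedComponentMk v) := by
      rw [hc]
    set pu := (hrep u).some
    set pv := (hrep v).some
    have q : G.Walk (Quot.out (G.connectedComponentMk u)) (Quot.out (G.connectedComponentMk u)) :=
      pu.append (SimpleGraph.Walk.cons huv (pv.reverse.copy rfl hr.symm))
    have hq := hodd _ (pu.append (SimpleGraph.Walk.cons huv (pv.reverse.copy rfl hr.symm)))
    rw [Nat.odd_iff] at hq
    simp only [SimpleGraph.Walk.length_append, SimpleGraph.Walk.length_cons,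
      SimpleGraph.Walk.length_copy, SimpleGraph.Walk.length_reverse] at hq
    have hmod : pu.length % 2 = pv.length % 2 := by
      have := (ZMod.natCast_eq_natCast_iff' pu.length pv.length 2).mp heq
      simpa using this
    omega

end BipLapAux

open BipLapAux in
/-- A graph `G` is bipartite (2-colorable) if and only if its Laplacian matrix
`L(G) = Δ - A` and signless Laplacian matrix `Q(G) = Δ + A` are similar. -/
theorem bipartite_iff_laplacian_similar_signless {V : Type*} [Fintype V] [DecidableEq V]
    (G : SimpleGraph V) [DecidableRel G.Adj] :
    G.Colorable 2 ↔
      ∃ S : Matrix V V ℝ, IsUnit S ∧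
        S * (Matrix.diagonal (fun v => (G.degree v : ℝ)) - G.adjMatrix ℝ) * S⁻¹ =
          Matrix.diagonal (fun v => (G.degree v : ℝ)) + G.adjMatrix ℝ := by
  classical
  constructor
  · rintro ⟨C⟩
    set s : V → ℝ := fun v => if C v = 0 then 1 else -1 with hs
    have hss : ∀ v, s v * s v = 1 := by
      intro v; by_cases h : C v = 0 <;> simp [hs, h]
    have hSS : Matrix.diagonal s * Matrix.diagonal s = 1 := by
      rw [Matrix.diagonal_mul_diagonal]
      simp only [hss]
      exact Matrix.diagonal_one
    refine ⟨Matrix.diagonal s, ⟨⟨Matrix.diagonal s, Matrix.diagonal s, hSS, hSS⟩, rfl⟩, ?_⟩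
    rw [Matrix.inv_eq_right_inv hSS]
    ext i j
    simp only [Matrix.mul_diagonal, Matrix.diagonal_mul, Matrix.sub_apply, Matrix.add_apply,
      Matrix.diagonal_apply, SimpleGraph.adjMatrix_apply]
    by_cases hij : i = j
    · subst hij
      simp only [if_pos rfl, if_true, ite_true, if_neg (G.irrefl (v := i)), sub_zero, add_zero]
      rw [mul_comm (s i) ((G.degree i : ℝ)), mul_assoc, hss i, mul_one]
    · rw [if_neg hij]
      by_cases hadj : G.Adj i j
      · have hne : C i ≠ C j := C.valid hadj
        have : s i * s j = -1 := by
          by_cases h1 : C i = 0 <;> by_cases h2 : C j = 0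
          · exact absurd (h1.trans h2.symm) hne
          · simp [hs, h1, h2]
          · simp [hs, h1, h2]
          · refine absurd ?_ hne
            have v1 : (C i).val ≠ 0 := fun hv => h1 (Fin.ext hv)
            have v2 : (C j).val ≠ 0 := fun hv => h2 (Fin.ext hv)
            have w1 := (C i).isLt
            have w2 := (C j).isLt
            exact Fin.ext (by omega)
        rw [if_pos hadj]
        nlinarith [this]
      · simp [hadj]
  · rintro ⟨S, hU, hSim⟩
    by_contra hcol
    obtain ⟨u0, p0, hp0⟩ := exists_oddWalk G hcol
    set L : Matrix V V ℝ := Matrix.diagonal (fun v => (G.degree v : ℝ)) - G.adjMatrix ℝ with hLdef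
    set Q : Matrix V V ℝ := Matrix.diagonal (fun v => (G.degree v : ℝ)) + G.adjMatrix ℝ with hQdef
    have hLlap : L = G.lapMatrix ℝ := rfl
    -- rank equality
    have hdetS : IsUnit S.det := (Matrix.isUnit_iff_isUnit_det S).mp hU
    have hdetSi : IsUnit S⁻¹.det := (Matrix.isUnit_nonsing_inv_det S hdetS)
    have hrank : Q.rank = L.rank := by
      rw [← hSim, Matrix.rank_mul_eq_left_of_isUnit_det S⁻¹ (S * L) hdetSi,
        Matrix.rank_mul_eq_right_of_isUnit_det S L hdetS]
    -- kernel dims equal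
    have hnQ := LinearMap.finrank_range_add_finrank_ker (Matrix.mulVecLin Q)
    have hnL := LinearMap.finrank_range_add_finrank_ker (Matrix.mulVecLin L)
    have hker : Module.finrank ℝ (LinearMap.ker (Matrix.mulVecLin Q)) =
        Module.finrank ℝ (LinearMap.ker (Matrix.mulVecLin L)) := by
      have hrQ : Q.rank = Module.finrank ℝ (LinearMap.range (Matrix.mulVecLin Q)) := rfl
      have hrL : L.rank = Module.finrank ℝ (LinearMap.range (Matrix.mulVecLin L)) := rfl
      omega
    -- ker L has dim = number of connected components
    have hkerL : Module.finrank ℝ (LinearMap.ker (Matrix.mulVecLin L)) =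
        Fintype.card G.ConnectedComponent := by
      rw [hLlap]
      have : LinearMap.ker (Matrix.mulVecLin (G.lapMatrix ℝ)) =
          LinearMap.ker (Matrix.toLin' (G.lapMatrix ℝ)) := by
        ext v; simp [Matrix.mulVecLin_apply, Matrix.toLin'_apply]
      rw [this, ← SimpleGraph.card_connectedComponent_eq_finrank_ker_toLin'_lapMatrix]
    -- ker Q embeds in functions on components other than c0
    set c0 : G.ConnectedComponent := G.connectedComponentMk u0 with hc0
    have hrep : ∀ v : V, G.Reachable (Quot.out (G.connectedComponentMk v)) v := by
      intro v; exact SimpleGraph.ConnectedComponent.exact (Quot.out_eq _)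
    let f : (LinearMap.ker (Matrix.mulVecLin Q)) →ₗ[ℝ]
        ({c : G.ConnectedComponent // c ≠ c0} → ℝ) :=
      { toFun := fun x c => x.1 (Quot.out c.1)
        map_add' := fun x y => rfl
        map_smul' := fun r x => rfl }
    have hinj : Function.Injective f := by
      rw [← LinearMap.ker_eq_bot]
      apply (Submodule.eq_bot_iff _).mpr
      rintro ⟨x, hx⟩ hfx
      have hx0 : Q *ᵥ x = 0 := hx
      have hadj : ∀ i j : V, G.Adj i j → x j = - x i := fun i j h => ker_adj G hx0 h
      have hu0 : x u0 = 0 := by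
        have := walk_sign G hadj p0
        rw [Odd.neg_one_pow hp0] at this
        linarith
      have hxall : x = 0 := by
        funext v
        show x v = 0
        by_cases hv : G.connectedComponentMk v = c0
        · obtain ⟨p⟩ : G.Reachable u0 v := by
            exact SimpleGraph.ConnectedComponent.exact (by rw [hv])
          rw [walk_sign G hadj p, hu0, mul_zero]
        · have hout : x (Quot.out (G.connectedComponentMk v)) = 0 :=
            congrFun hfx ⟨G.connectedComponentMk v, hv⟩
          obtain ⟨p⟩ := hrep v
          rw [walk_sign G hadj p, hout, mul_zero]
      exact Subtype.ext hxall
    have hle : Module.finrank ℝ (LinearMap.ker (Matrix.mulVecLin Q)) ≤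
        Fintype.card {c : G.ConnectedComponent // c ≠ c0} := by
      have := LinearMap.finrank_le_finrank_of_injective hinj
      simpa [Module.finrank_fintype_fun_eq_card] using this
    have hlt : Fintype.card {c : G.ConnectedComponent // c ≠ c0} <
        Fintype.card G.ConnectedComponent :=
      Fintype.card_subtype_lt (x := c0) (by simp)
    omega
end
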